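/- arXiv:1302.1952 — 6 statements merged into one kernel-verified Lean document; each statement's English description precedes it below -/
import Mathlib

section
/- Let m, n be positive integers with m > n, and let ψ₁, …, ψ_n : (0,∞) → (0,∞) be functions tending to zero at infinity. If the series ∑_{r=1}^∞ ψ₁(r)⋯ψ_n(r) r^{m−n−1} converges, then the set W₀(m,n,ψ) has mn-dimensional Lebesgue measure zero. -/
open MeasureTheory Filter NNReal ENNReal

/-- Supremum norm of an integer vector, as a real number. -/
noncomputable def supZ {k : ℕ} (q : Fin k → ℤ) : ℝ := ‖(fun i => (q i : ℝ))‖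

/-- The set `W₀(m,n,ψ)` of `ψ`-approximable `m × n` matrices (rows indexed by
`Fin m`, columns by `Fin n`) with all entries in `[-1/2, 1/2]`. -/
def W0 (m n : ℕ) (ψ : Fin n → ℝ → ℝ) : Set (Fin m → Fin n → ℝ) :=
  {X | (∀ j i, X j i ∈ Set.Icc (-(1:ℝ)/2) (1/2)) ∧
    {q : Fin m → ℤ | q ≠ 0 ∧ ∀ i, |∑ j, (q j : ℝ) * X j i| < ψ i (supZ q)}.Infinite}

def natN {m : ℕ} (q : Fin m → ℤ) : ℕ := Finset.univ.sup fun j => (q j).natAbs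

lemma nnnorm_intCast (x : ℤ) : ‖(x:ℝ)‖₊ = x.natAbs := by
  ext; simp [coe_nnnorm, Int.norm_cast_real, Int.norm_eq_abs, Nat.cast_natAbs]

lemma supZ_eq_natN {m : ℕ} (q : Fin m → ℤ) : supZ q = (natN q : ℝ) := by
  rw [supZ, Pi.norm_def]
  have : (Finset.univ.sup fun b => ‖((q b : ℝ))‖₊) = ((natN q : ℝ≥0)) := by
    rw [natN, Finset.comp_sup_eq_sup_comp (Nat.cast : ℕ → ℝ≥0)
      (fun x y => by exact_mod_cast Nat.cast_max x y) (by simp)]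
    simp [Function.comp_def, nnnorm_intCast]
  rw [this]; simp

lemma one_le_natN {m : ℕ} {q : Fin m → ℤ} (hq : q ≠ 0) : 1 ≤ natN q := by
  obtain ⟨j, hj⟩ : ∃ j, q j ≠ 0 := by
    by_contra h; push_neg at h; exact hq (funext h)
  calc 1 ≤ (q j).natAbs := by omega
  _ ≤ natN q := Finset.le_sup (f := fun j => (q j).natAbs) (Finset.mem_univ j)

lemma measA {k n : ℕ} (q : Fin k → ℤ) (c : Fin n → ℝ) :
    MeasurableSet {X : Fin k → Fin n → ℝ | (∀ j i, X j i ∈ Set.Icc (-(1:ℝ)/2) (1/2)) ∧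
      ∀ i, |∑ j, (q j : ℝ) * X j i| < c i} := by
  have h1 : ∀ (j : Fin k) (i : Fin n), Measurable fun X : Fin k → Fin n → ℝ => X j i :=
    fun j i => (measurable_pi_apply i).comp (measurable_pi_apply j)
  rw [Set.setOf_and]
  apply MeasurableSet.inter
  · rw [show {X : Fin k → Fin n → ℝ | ∀ j i, X j i ∈ Set.Icc (-(1:ℝ)/2) (1/2)}
        = ⋂ j, ⋂ i, (fun X : Fin k → Fin n → ℝ => X j i) ⁻¹' (Set.Icc (-(1:ℝ)/2) (1/2)) by
      ext X; simp]
    exact MeasurableSet.iInter fun j => MeasurableSet.iInter fun i =>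
      (h1 j i) measurableSet_Icc
  · rw [show {X : Fin k → Fin n → ℝ | ∀ i, |∑ j, (q j : ℝ) * X j i| < c i}
        = ⋂ i, (fun X : Fin k → Fin n → ℝ => |∑ j, (q j : ℝ) * X j i|) ⁻¹' (Set.Iio (c i)) by
      ext X; simp]
    refine MeasurableSet.iInter fun i => ?_
    exact ((Finset.measurable_sum Finset.univ fun j _ =>
      (measurable_const.mul (h1 j i))).abs) measurableSet_Iio

lemma volume_A_le {k n : ℕ} (ψ : Fin n → ℝ → ℝ) (q : Fin (k+1) → ℤ) (j0 : Fin (k+1))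
    (hq : q j0 ≠ 0) :
    volume {X : Fin (k+1) → Fin n → ℝ | (∀ j i, X j i ∈ Set.Icc (-(1:ℝ)/2) (1/2)) ∧
        ∀ i, |∑ j, (q j : ℝ) * X j i| < ψ i (supZ q)} ≤
      ∏ i, ENNReal.ofReal (2 * (ψ i (supZ q) / |(q j0 : ℝ)|)) := by
  set r := supZ q with hr
  set A := {X : Fin (k+1) → Fin n → ℝ | (∀ j i, X j i ∈ Set.Icc (-(1:ℝ)/2) (1/2)) ∧
        ∀ i, |∑ j, (q j : ℝ) * X j i| < ψ i r} with hA
  have hAm : MeasurableSet A := measA q _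
  set e := MeasurableEquiv.piFinSuccAbove (fun _ : Fin (k+1) => (Fin n → ℝ)) j0 with he
  have hmp : MeasurePreserving e.symm volume volume :=
    (volume_preserving_piFinSuccAbove (fun _ : Fin (k+1) => (Fin n → ℝ)) j0).symm e
  have hvol : volume A = volume (e.symm ⁻¹' A) :=
    (hmp.measure_preimage hAm.nullMeasurableSet).symm
  set S := e.symm ⁻¹' A with hS
  have hSm : MeasurableSet S := e.symm.measurable hAm
  have hBoxEq : {z : Fin k → Fin n → ℝ | ∀ j i, z j i ∈ Set.Icc (-(1:ℝ)/2) (1/2)}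
      = Set.univ.pi (fun _ : Fin k => Set.univ.pi fun _ : Fin n => Set.Icc (-(1:ℝ)/2) (1/2)) := by
    ext z; simp only [Set.mem_setOf_eq, Set.mem_pi, Set.mem_univ, forall_true_left, true_implies]
  have hBox : MeasurableSet {z : Fin k → Fin n → ℝ | ∀ j i, z j i ∈ Set.Icc (-(1:ℝ)/2) (1/2)} := by
    rw [hBoxEq]
    exact MeasurableSet.univ_pi fun j => MeasurableSet.univ_pi fun i => measurableSet_Icc
  have hBoxVol : volume {z : Fin k → Fin n → ℝ | ∀ j i, z j i ∈ Set.Icc (-(1:ℝ)/2) (1/2)} = 1 := by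
    rw [hBoxEq, volume_pi_pi]
    have h1 : volume (Set.univ.pi fun _ : Fin n => Set.Icc (-(1:ℝ)/2) (1/2)) = 1 := by
      rw [volume_pi_pi]
      have : volume (Set.Icc (-(1:ℝ)/2) (1/2)) = 1 := by
        rw [Real.volume_Icc]; norm_num
      rw [Finset.prod_congr rfl fun i _ => this, Finset.prod_const, one_pow]
    rw [Finset.prod_congr rfl fun j _ => h1, Finset.prod_const, one_pow]
  have key : ∀ z : Fin k → Fin n → ℝ,
      volume ((fun y => (y, z)) ⁻¹' S) ≤
      Set.indicator {z : Fin k → Fin n → ℝ | ∀ j i, z j i ∈ Set.Icc (-(1:ℝ)/2) (1/2)}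
        (fun _ => ∏ i, ENNReal.ofReal (2 * (ψ i r / |(q j0 : ℝ)|))) z := by
    intro z
    have habs : (0:ℝ) < |(q j0 : ℝ)| := by
      simp only [abs_pos]
      exact_mod_cast hq
    set c : Fin n → ℝ := fun i => ∑ j', (q (j0.succAbove j') : ℝ) * z j' i with hc
    have hmem : ∀ y : Fin n → ℝ, (y, z) ∈ S ↔
        Fin.insertNth (α := fun _ => Fin n → ℝ) j0 y z ∈ A := by
      intro y
      have : e.symm (y, z) = Fin.insertNth (α := fun _ => Fin n → ℝ) j0 y z := by
        funext j
        rw [he, MeasurableEquiv.piFinSuccAbove_symm_apply, Fin.insertNthEquiv_apply]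
      rw [hS, Set.mem_preimage, this]
    by_cases hz : z ∈ {z : Fin k → Fin n → ℝ | ∀ j i, z j i ∈ Set.Icc (-(1:ℝ)/2) (1/2)}
    · rw [Set.indicator_of_mem hz]
      have hsub : (fun y => (y, z)) ⁻¹' S ⊆
          Set.univ.pi fun i => Metric.ball (-(c i) / (q j0 : ℝ)) (ψ i r / |(q j0:ℝ)|) := by
        intro y hy
        rw [Set.mem_preimage, hmem y] at hy
        set X : Fin (k+1) → Fin n → ℝ := Fin.insertNth (α := fun _ => Fin n → ℝ) j0 y z with hX
        rw [Set.mem_pi]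
        intro i _
        have hyi := hy.2 i
        have hsum : ∑ j, (q j : ℝ) * X j i = (q j0:ℝ) * y i + c i := by
          rw [Fin.sum_univ_succAbove (fun j => (q j : ℝ) * X j i) j0]
          simp only [hX, Fin.insertNth_apply_same, Fin.insertNth_apply_succAbove]
          rfl
        rw [hsum] at hyi
        rw [Metric.mem_ball, Real.dist_eq]
        have h1 : y i - -(c i) / (q j0:ℝ) = ((q j0:ℝ) * y i + c i) / (q j0:ℝ) := by
          field_simp
          ring
        rw [h1, abs_div]
        exact (div_lt_div_iff_of_pos_right habs).mpr hyi
      refine (measure_mono hsub).trans ?_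
      rw [volume_pi_pi]
      exact le_of_eq (Finset.prod_congr rfl fun i _ => by rw [Real.volume_ball])
    · rw [Set.indicator_of_notMem hz]
      have : (fun y => (y, z)) ⁻¹' S = ∅ := by
        rw [Set.eq_empty_iff_forall_notMem]
        intro y hy
        rw [Set.mem_preimage, hmem y] at hy
        apply hz
        intro j' i
        have h2 := hy.1 (j0.succAbove j') i
        rwa [Fin.insertNth_apply_succAbove (α := fun _ => Fin n → ℝ)] at h2
      simp [this]
  calc volume A = volume.prod volume S := by
        rw [hvol]; rfl
    _ = ∫⁻ z, volume ((fun y => (y, z)) ⁻¹' S) ∂volume := Measure.prod_apply_symm hSm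
    _ ≤ ∫⁻ z, Set.indicator {z : Fin k → Fin n → ℝ | ∀ j i, z j i ∈ Set.Icc (-(1:ℝ)/2) (1/2)}
        (fun _ => ∏ i, ENNReal.ofReal (2 * (ψ i r / |(q j0 : ℝ)|))) z ∂volume :=
      lintegral_mono key
    _ = (∏ i, ENNReal.ofReal (2 * (ψ i r / |(q j0 : ℝ)|))) *
        volume {z : Fin k → Fin n → ℝ | ∀ j i, z j i ∈ Set.Icc (-(1:ℝ)/2) (1/2)} := by
      rw [lintegral_indicator_const hBox]
    _ ≤ _ := by
      rw [hBoxVol, mul_one]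

lemma tsum_fiber_le {k : ℕ} (r : ℕ) (g : ℝ≥0∞) :
    ∑' (_x : {q : Fin (k+1) → ℤ // natN q = r}), g ≤ (((k+1) * (2 * (2*r+1)^k) : ℕ) : ℝ≥0∞) * g := by
  classical
  set T : Finset (Fin (k+1) → ℤ) := Finset.univ.biUnion (fun j0 : Fin (k+1) =>
    Fintype.piFinset (fun j => if j = j0 then ({(r:ℤ), -(r:ℤ)} : Finset ℤ)
      else Finset.Icc (-(r:ℤ)) (r:ℤ))) with hT
  have hmem0 : ∀ q : Fin (k+1) → ℤ, natN q = r → q ∈ T := by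
    intro q hq
    obtain ⟨j0, -, hj0⟩ := Finset.exists_mem_eq_sup Finset.univ
      (Finset.univ_nonempty) (fun j => (q j).natAbs)
    rw [Finset.mem_biUnion]
    refine ⟨j0, Finset.mem_univ _, ?_⟩
    rw [Fintype.mem_piFinset]
    intro j
    by_cases hj : j = j0
    · subst hj
      simp only [if_pos rfl, Finset.mem_insert, Finset.mem_singleton]
      have hnat : (q j).natAbs = r := by rw [← hj0]; exact hq
      simpa using Int.natAbs_eq_iff.mp hnat
    · rw [if_neg hj, Finset.mem_Icc]
      have : (q j).natAbs ≤ r := by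
        rw [← hq]; exact Finset.le_sup (f := fun j => (q j).natAbs) (Finset.mem_univ j)
      omega
  have hinj : Function.Injective (fun x : {q : Fin (k+1) → ℤ // natN q = r} =>
      (⟨x.1, hmem0 x.1 x.2⟩ : {y // y ∈ T})) := by
    intro a b hab
    simp only [Subtype.mk.injEq] at hab
    exact Subtype.ext hab
  haveI : Finite {q : Fin (k+1) → ℤ // natN q = r} := Finite.of_injective _ hinj
  haveI := Fintype.ofFinite {q : Fin (k+1) → ℤ // natN q = r}
  have hcard : Fintype.card {q : Fin (k+1) → ℤ // natN q = r} ≤ (k+1) * (2 * (2*r+1)^k) := by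
    refine le_trans (Fintype.card_le_of_injective _ hinj) ?_
    rw [Fintype.card_coe]
    refine le_trans (Finset.card_biUnion_le) ?_
    have hone : ∀ j0 : Fin (k+1), (Fintype.piFinset (fun j => if j = j0 then
        ({(r:ℤ), -(r:ℤ)} : Finset ℤ) else Finset.Icc (-(r:ℤ)) (r:ℤ))).card
        ≤ 2 * (2*r+1)^k := by
      intro j0
      rw [Fintype.card_piFinset]
      rw [Fin.prod_univ_succAbove (fun j => (if j = j0 then ({(r:ℤ), -(r:ℤ)} : Finset ℤ)
        else Finset.Icc (-(r:ℤ)) (r:ℤ)).card) j0]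
      rw [if_pos rfl]
      have h2 : ({(r:ℤ), -(r:ℤ)} : Finset ℤ).card ≤ 2 := by
        refine le_trans (Finset.card_insert_le _ _) ?_
        simp
      have h3 : ∀ j' : Fin k, (if j0.succAbove j' = j0 then ({(r:ℤ), -(r:ℤ)} : Finset ℤ)
          else Finset.Icc (-(r:ℤ)) (r:ℤ)).card = 2*r+1 := by
        intro j'
        rw [if_neg (Fin.succAbove_ne j0 j')]
        rw [Int.card_Icc]
        omega
      calc ({(r:ℤ), -(r:ℤ)} : Finset ℤ).card * ∏ j' : Fin k, (if j0.succAbove j' = j0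
            then ({(r:ℤ), -(r:ℤ)} : Finset ℤ) else Finset.Icc (-(r:ℤ)) (r:ℤ)).card
          ≤ 2 * ∏ j' : Fin k, (2*r+1) := by
            rw [Finset.prod_congr rfl fun j' _ => h3 j']
            exact Nat.mul_le_mul_right _ h2
        _ = 2 * (2*r+1)^k := by rw [Finset.prod_const, Finset.card_univ, Fintype.card_fin]
    calc ∑ j0 : Fin (k+1), (Fintype.piFinset (fun j => if j = j0 then
          ({(r:ℤ), -(r:ℤ)} : Finset ℤ) else Finset.Icc (-(r:ℤ)) (r:ℤ))).card
        ≤ ∑ _j0 : Fin (k+1), 2 * (2*r+1)^k := Finset.sum_le_sum fun j0 _ => hone j0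
      _ = (k+1) * (2 * (2*r+1)^k) := by
          rw [Finset.sum_const, Finset.card_univ, Fintype.card_fin, smul_eq_mul]
  rw [tsum_fintype, Finset.sum_const, Finset.card_univ, nsmul_eq_mul]
  exact mul_le_mul_left (by exact_mod_cast Nat.cast_le.mpr hcard) g

theorem stmt0 (m n : ℕ) (hn : 0 < n) (hmn : n < m)
    (ψ : Fin n → ℝ → ℝ)
    (hpos : ∀ i, ∀ r > (0:ℝ), 0 < ψ i r)
    (hlim : ∀ i, Tendsto (ψ i) atTop (nhds 0))
    (hconv : Summable (fun r : ℕ =>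
      (∏ i, ψ i ((r : ℝ) + 1)) * ((r : ℝ) + 1) ^ (m - n - 1))) :
    volume (W0 m n ψ) = 0 := by
  classical
  rcases m with _ | k
  · omega
  have hnk : n ≤ k := by omega
  have hexp : k + 1 - n - 1 = k - n := by omega
  rw [hexp] at hconv
  set A : (Fin (k+1) → ℤ) → Set (Fin (k+1) → Fin n → ℝ) := fun q =>
    {X | q ≠ 0 ∧ (∀ j i, X j i ∈ Set.Icc (-(1:ℝ)/2) (1/2)) ∧
      ∀ i, |∑ j, (q j : ℝ) * X j i| < ψ i (supZ q)} with hA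
  have hsub : W0 (k+1) n ψ ⊆ limsup A cofinite := by
    intro X hX
    rw [mem_limsup_iff_frequently_mem, frequently_cofinite_iff_infinite]
    obtain ⟨hbox, hinf⟩ := hX
    refine hinf.mono ?_
    intro q hq
    exact ⟨hq.1, hbox, hq.2⟩
  refine measure_mono_null hsub (measure_limsup_cofinite_eq_zero ?_)
  set g : ℕ → ℝ≥0∞ := fun r => ∏ i, ENNReal.ofReal (2 * (ψ i (r:ℝ) / (r:ℝ))) with hg
  have hAle : ∀ q : Fin (k+1) → ℤ, volume (A q) ≤ g (natN q) := by
    intro q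
    by_cases hq : q = 0
    · have : A q = ∅ := by
        rw [Set.eq_empty_iff_forall_notMem]; intro X hX; exact hX.1 hq
      rw [this]; simp
    · obtain ⟨j0, -, hj0⟩ := Finset.exists_mem_eq_sup Finset.univ
        Finset.univ_nonempty (fun j => (q j).natAbs)
      have hj0' : natN q = (q j0).natAbs := hj0
      have hqj0 : q j0 ≠ 0 := by
        have h1 : 1 ≤ (q j0).natAbs := by
          rw [← hj0']; exact one_le_natN hq
        intro h; rw [h] at h1; simp at h1
      have hAeq : A q = {X : Fin (k+1) → Fin n → ℝ |
          (∀ j i, X j i ∈ Set.Icc (-(1:ℝ)/2) (1/2)) ∧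
          ∀ i, |∑ j, (q j : ℝ) * X j i| < ψ i (supZ q)} := by
        ext X; simp only [hA, Set.mem_setOf_eq]
        exact ⟨fun h => ⟨h.2.1, h.2.2⟩, fun h => ⟨hq, h.1, h.2⟩⟩
      rw [hAeq]
      refine (volume_A_le ψ q j0 hqj0).trans ?_
      have h2 : |(q j0 : ℝ)| = ((natN q : ℕ) : ℝ) := by
        rw [hj0', Nat.cast_natAbs]
        simp [Int.cast_abs]
      rw [supZ_eq_natN q]
      rw [hg]
      refine le_of_eq (Finset.prod_congr rfl fun i _ => ?_)
      rw [h2]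
  have hsum : ∑' q : Fin (k+1) → ℤ, volume (A q) ≤
      ∑' r : ℕ, (((k+1) * (2 * (2*r+1)^k) : ℕ) : ℝ≥0∞) * g r := by
    calc ∑' q : Fin (k+1) → ℤ, volume (A q)
        ≤ ∑' q : Fin (k+1) → ℤ, g (natN q) := ENNReal.tsum_le_tsum hAle
      _ = ∑' (p : Σ r : ℕ, {q : Fin (k+1) → ℤ // natN q = r}), g (natN p.2.1) :=
          ((Equiv.sigmaFiberEquiv (natN : (Fin (k+1) → ℤ) → ℕ)).tsum_eq
            (fun q => g (natN q))).symm
      _ = ∑' (r : ℕ) (x : {q : Fin (k+1) → ℤ // natN q = r}), g (natN x.1) :=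
          ENNReal.tsum_sigma' _
      _ = ∑' (r : ℕ) (_x : {q : Fin (k+1) → ℤ // natN q = r}), g r := by
          refine tsum_congr fun r => tsum_congr fun x => by rw [x.2]
      _ ≤ ∑' r : ℕ, (((k+1) * (2 * (2*r+1)^k) : ℕ) : ℝ≥0∞) * g r :=
          ENNReal.tsum_le_tsum fun r => tsum_fiber_le r (g r)
  refine ne_top_of_le_ne_top ?_ hsum
  set C : ℝ := ((k+1) * 2 * 3^k * 2^n : ℝ) with hC
  have hCpos : 0 < C := by positivity
  have hupos : ∀ s : ℕ, 0 ≤ (∏ i, ψ i ((s:ℝ)+1)) * ((s:ℝ)+1)^(k-n) := by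
    intro s
    have : (0:ℝ) < (s:ℝ)+1 := by positivity
    have h1 : 0 ≤ ∏ i, ψ i ((s:ℝ)+1) :=
      Finset.prod_nonneg fun i _ => (hpos i _ this).le
    positivity
  have hterm : ∀ s : ℕ, (((k+1) * (2 * (2*(s+1)+1)^k) : ℕ) : ℝ≥0∞) * g (s+1) ≤
      ENNReal.ofReal (C * ((∏ i, ψ i ((s:ℝ)+1)) * ((s:ℝ)+1)^(k-n))) := by
    intro s
    set t : ℝ := (s:ℝ)+1 with ht
    have htpos : (0:ℝ) < t := by positivity
    have hψt : ∀ i, 0 < ψ i t := fun i => hpos i t htpos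
    have hcast : (((s+1 : ℕ)) : ℝ) = t := by push_cast [ht]; ring
    have hgs : g (s+1) = ENNReal.ofReal (∏ i, (2 * (ψ i t / t))) := by
      rw [hg, ENNReal.ofReal_prod_of_nonneg fun i _ => by
        have := (hψt i).le; positivity]
      try simp only [hcast]
      try push_cast
      try ring_nf
    rw [hgs, ← ENNReal.ofReal_natCast, ← ENNReal.ofReal_mul (by positivity)]
    refine ENNReal.ofReal_le_ofReal ?_
    have hNle : ((((k+1) * (2 * (2*(s+1)+1)^k) : ℕ)) : ℝ) ≤ (k+1) * 2 * 3^k * t^k := by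
      push_cast
      have h31 : ((2:ℝ)*(s+1)+1) ≤ 3*((s:ℝ)+1) := by push_cast; linarith
      have h32 : ((2:ℝ)*(s+1)+1)^k ≤ (3*((s:ℝ)+1))^k :=
        pow_le_pow_left₀ (by positivity) h31 k
      calc ((k:ℝ)+1) * (2 * (2*(s+1)+1)^k) ≤ ((k:ℝ)+1) * (2 * (3*((s:ℝ)+1))^k) := by
            have := mul_le_mul_of_nonneg_left h32 (by norm_num : (0:ℝ) ≤ 2)
            exact mul_le_mul_of_nonneg_left this (by positivity)
        _ = (k+1) * 2 * 3^k * t^k := by rw [mul_pow, ht]; ring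
    have hprod : (∏ i, (2 * (ψ i t / t))) = 2^n * (∏ i, ψ i t) / t^n := by
      rw [Finset.prod_mul_distrib, Finset.prod_const, Finset.card_univ, Fintype.card_fin,
        Finset.prod_div_distrib, Finset.prod_const, Finset.card_univ, Fintype.card_fin]
      ring
    rw [hprod]
    have hP : 0 ≤ ∏ i, ψ i t := Finset.prod_nonneg fun i _ => (hψt i).le
    calc ((((k+1) * (2 * (2*(s+1)+1)^k) : ℕ)) : ℝ) * (2^n * (∏ i, ψ i t) / t^n)
        ≤ ((k+1) * 2 * 3^k * t^k) * (2^n * (∏ i, ψ i t) / t^n) := by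
          refine mul_le_mul_of_nonneg_right hNle (by positivity)
      _ = C * ((∏ i, ψ i t) * t^(k-n)) := by
          rw [pow_sub₀ t (ne_of_gt htpos) hnk, hC]
          field_simp
  have hne : ∑' r : ℕ, (((k+1) * (2 * (2*r+1)^k) : ℕ) : ℝ≥0∞) * g r ≠ ⊤ := by
    rw [tsum_eq_zero_add' ENNReal.summable]
    have h0 : g 0 = 0 := by
      rw [hg]
      refine Finset.prod_eq_zero (Finset.mem_univ (⟨0, hn⟩ : Fin n)) ?_
      simp
    rw [h0, mul_zero, zero_add]
    refine ne_top_of_le_ne_top ?_ (ENNReal.tsum_le_tsum hterm)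
    rw [← ENNReal.ofReal_tsum_of_nonneg (fun s => mul_nonneg hCpos.le (hupos s))
      (hconv.mul_left C)]
    exact ENNReal.ofReal_ne_top
  exact hne
end

section
/- Let m > n > 0 be integers, let e₁, …, e_n ∈ ℝ^m be linearly independent vectors, and let τ₁, …, τ_n be positive real numbers. Assume there is a function ε : ℕ → ℝ with ε(Q) → 0 as Q → ∞ such that for infinitely many positive integers Q there exist m linearly independent vectors q^{(1)}, …, q^{(m)} ∈ ℤ^m satisfying, for every j ∈ {1,…,m}: ‖q^{(j)}‖ ≤ Q and |q^{(j)} · e_i| ≤ Q^{−τ_i + ε(Q)} for all i ∈ {1,…,n}. Then every linear subspace F of ℝ^m which is defined over the rationals and contains e₁, …, e_n satisfies dim F ≥ n + τ₁ + … + τ_n. -/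
open MeasureTheory Filter

/-- A subspace of `ℝ^m` is defined over the rationals if it is spanned by
vectors all of whose coordinates are rational. -/
def DefinedOverQ {m : ℕ} (F : Submodule ℝ (Fin m → ℝ)) : Prop :=
  ∃ B : Set (Fin m → ℝ), (∀ v ∈ B, ∀ i, ∃ a : ℚ, v i = (a : ℝ)) ∧ F = Submodule.span ℝ B

open Finset

/-- determinant bound by row bounds -/
lemma my_abs_det_le {ι : Type*} [Fintype ι] [DecidableEq ι] (A : Matrix ι ι ℝ) (rb : ι → ℝ)
    (h0 : ∀ k, 0 ≤ rb k) (h : ∀ k j, |A k j| ≤ rb k) :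
    |A.det| ≤ (Nat.factorial (Fintype.card ι)) * ∏ k, rb k := by
  rw [Matrix.det_apply]
  refine (Finset.abs_sum_le_sum_abs _ _).trans ?_
  have hterm : ∀ σ : Equiv.Perm ι, |Equiv.Perm.sign σ • ∏ i, A (σ i) i| ≤ ∏ k, rb k := by
    intro σ
    have h1 : |Equiv.Perm.sign σ • ∏ i, A (σ i) i| = |∏ i, A (σ i) i| := by
      rcases Int.units_eq_one_or (Equiv.Perm.sign σ) with hs | hs <;> simp [hs]
    rw [h1, Finset.abs_prod]
    calc ∏ i, |A (σ i) i| ≤ ∏ i, rb (σ i) :=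
          Finset.prod_le_prod (fun i _ => abs_nonneg _) (fun i _ => h (σ i) i)
      _ = ∏ k, rb k := Equiv.prod_comp σ rb
  calc ∑ σ : Equiv.Perm ι, |Equiv.Perm.sign σ • ∏ i, A (σ i) i|
      ≤ (Finset.univ : Finset (Equiv.Perm ι)).card • ∏ k, rb k :=
        Finset.sum_le_card_nsmul _ _ _ (fun σ _ => hterm σ)
    _ = (Nat.factorial (Fintype.card ι)) * ∏ k, rb k := by
        rw [Finset.card_univ, Fintype.card_perm, nsmul_eq_mul]

lemma my_det_ne_zero_of_rows {ι K : Type*} [Fintype ι] [DecidableEq ι] [Field K]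
    {M : Matrix ι ι K} (h : LinearIndependent K (fun i => M i)) : M.det ≠ 0 := by
  intro h0
  obtain ⟨v, hv0, hv⟩ := Matrix.exists_vecMul_eq_zero_iff.mpr h0
  apply hv0
  have := (Fintype.linearIndependent_iff.mp h) v ?_
  · funext i; exact this i
  · funext j
    have := congrFun hv j
    simpa [Matrix.vecMul, dotProduct] using this

lemma my_rows_of_det_ne_zero {ι K : Type*} [Fintype ι] [DecidableEq ι] [Field K]
    {M : Matrix ι ι K} (h : M.det ≠ 0) : LinearIndependent K (fun i => M i) := by
  by_contra hc
  obtain ⟨g, hg, i, hi⟩ := Fintype.not_linearIndependent_iff.mp hc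
  apply h
  rw [← Matrix.exists_vecMul_eq_zero_iff]
  refine ⟨g, fun hg0 => hi (by rw [hg0]; rfl), ?_⟩
  funext j
  have := congrFun hg j
  simpa [Matrix.vecMul, dotProduct] using this

lemma my_rat_indep_to_real {k m : ℕ} {y : Fin k → Fin m → ℚ} (hy : LinearIndependent ℚ y) :
    LinearIndependent ℝ (fun l => fun i => ((y l i : ℝ))) := by
  classical
  obtain ⟨b, -, hyb, hspan, hbli⟩ :=
    exists_linearIndepOn_id_extension ((linearIndepOn_id_range_iff hy.injective).mpr hy) (Set.subset_univ _)
  have hbfin : b.Finite := hbli.setFinite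
  haveI : Fintype b := hbfin.fintype
  have hspan' : Submodule.span ℚ b = ⊤ := by
    rw [eq_top_iff]
    intro x _
    exact hspan (Set.mem_univ x)
  have hcard : Fintype.card b = m := by
    have h1 := finrank_span_set_eq_card hbli
    rw [hspan'] at h1
    have h2 : Module.finrank ℚ (⊤ : Submodule ℚ (Fin m → ℚ)) = m := by
      simp [Module.finrank_pi]
    rw [h2] at h1
    rw [← Set.toFinset_card, ← h1]
  let ψ : Fin m ≃ b := (Fintype.equivFinOfCardEq hcard).symm
  let Y : Matrix (Fin m) (Fin m) ℚ := fun l i => (ψ l : Fin m → ℚ) i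
  have hYrows : LinearIndependent ℚ (fun l => Y l) := by
    have : (fun l => Y l) = (fun x : b => (x : Fin m → ℚ)) ∘ ψ := rfl
    rw [this]
    exact hbli.comp ψ ψ.injective
  have hYdet : Y.det ≠ 0 := my_det_ne_zero_of_rows hYrows
  let YR : Matrix (Fin m) (Fin m) ℝ := Y.map (fun a => (a : ℝ))
  have hYRdet : YR.det ≠ 0 := by
    have : YR.det = ((Y.det : ℚ) : ℝ) := (RingHom.map_det (Rat.castHom ℝ) Y).symm
    rw [this]
    exact_mod_cast hYdet
  have hYRrows : LinearIndependent ℝ (fun l => YR l) := my_rows_of_det_ne_zero hYRdet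
  -- our family is a subfamily of the rows of YR
  have hmem : ∀ l, y l ∈ b := fun l => hyb (Set.mem_range_self l)
  let g : Fin k → Fin m := fun l => ψ.symm ⟨y l, hmem l⟩
  have hginj : Function.Injective g := by
    intro a a' h
    have h2 : (⟨y a, hmem a⟩ : b) = ⟨y a', hmem a'⟩ := ψ.symm.injective h
    exact hy.injective (congrArg Subtype.val h2)
  have hcomp : (fun l => fun i => ((y l i : ℝ))) = (fun l => YR l) ∘ g := by
    funext l i
    simp only [Function.comp_apply, YR, Matrix.map_apply, Y, g, Equiv.apply_symm_apply]
    show ((y l i : ℚ) : ℝ) = (((ψ (ψ.symm ⟨y l, hmem l⟩) : Fin m → ℚ) i : ℚ) : ℝ)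
    rw [Equiv.apply_symm_apply]
  rw [hcomp]
  exact hYRrows.comp g hginj

lemma my_key {m n p s : ℕ} (hm : (n + p) + s = m)
    (e : Fin n → Fin m → ℝ) (ev : (Fin n ⊕ Fin p) → Fin m → ℝ)
    (hev : ∀ i, ev (Sum.inl i) = e i)
    (zR : Fin s → Fin m → ℝ)
    (hzint : ∀ l, ∃ w : Fin m → ℤ, (fun i => (w i : ℝ)) = zR l)
    (huli : LinearIndependent ℝ (Sum.elim ev zR))
    (horth : ∀ (k : Fin n ⊕ Fin p) (l : Fin s), ∑ i, ev k i * zR l i = 0)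
    (σι : ((Fin n ⊕ Fin p) ⊕ Fin s) ≃ Fin m)
    (Cv : ℝ) (hCv : ∀ j : Fin p, ∑ i, |ev (Sum.inr j) i| ≤ Cv)
    (β : Fin n → ℝ) (hβ : ∀ i, 0 ≤ β i)
    (Q : ℕ) (q : Fin m → Fin m → ℤ)
    (hqli : LinearIndependent ℝ (fun j => fun i => ((q j i : ℝ))))
    (hqn : ∀ j, supZ (q j) ≤ Q)
    (hqe : ∀ j i, |∑ k, (q j k : ℝ) * e i k| ≤ β i) :
    |Matrix.det (Matrix.of fun k i' => Sum.elim ev zR k (σι i'))| ≤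
      (Nat.factorial (n + p)) * ((∏ i, β i) * (Cv * Q) ^ p) *
        |Matrix.det (Matrix.of fun k l : Fin s => ∑ i, zR k i * zR l i)| := by
  classical
  set u : ((Fin n ⊕ Fin p) ⊕ Fin s) → Fin m → ℝ := Sum.elim ev zR with hu
  set qR : Fin m → Fin m → ℝ := fun j i => (q j i : ℝ) with hqR
  have hqspan : Submodule.span ℝ (Set.range qR) = ⊤ := by
    apply hqli.span_eq_top_of_card_eq_finrank'
    simp [Module.finrank_pi]
  have hzRli : LinearIndependent ℝ zR := huli.comp Sum.inr Sum.inr_injective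
  obtain ⟨br, hbr_sub, hzbr, hspanbr, hbrli⟩ :=
    exists_linearIndepOn_id_extension ((linearIndepOn_id_range_iff hzRli.injective).mpr hzRli)
      (Set.subset_union_left (t := Set.range qR))
  have hbrfin : br.Finite := hbrli.setFinite
  haveI : Fintype ↥br := hbrfin.fintype
  have hbrspan : Submodule.span ℝ br = ⊤ := by
    rw [eq_top_iff, ← hqspan, Submodule.span_le]
    intro x hx
    exact hspanbr (Set.mem_union_right _ hx)
  have hbrcard : Fintype.card ↥br = m := by
    have h1 := finrank_span_set_eq_card hbrli
    have h2 : Module.finrank ℝ (⊤ : Submodule ℝ (Fin m → ℝ)) = m := by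
      simp
    rw [hbrspan, h2] at h1
    rw [← Set.toFinset_card, ← h1]
  set brd := br \ Set.range zR with hbrd
  have hbrdq : brd ⊆ Set.range qR := by
    intro x hx
    rcases hbr_sub hx.1 with h | h
    · exact absurd h hx.2
    · exact h
  haveI : Fintype ↥brd := (hbrfin.diff).fintype
  have hbrdcard : Fintype.card ↥brd = n + p := by
    have h1 : (brd).ncard = br.ncard - (Set.range zR).ncard :=
      Set.ncard_diff hzbr (Set.finite_range zR)
    have h2 : br.ncard = m := by
      rw [← Nat.card_coe_set_eq, Nat.card_eq_fintype_card, hbrcard]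
    have h3 : (Set.range zR).ncard = s := by
      rw [← Set.image_univ, Set.ncard_image_of_injective _ hzRli.injective]
      simp [Set.ncard_univ]
    have h4 : Fintype.card ↥brd = brd.ncard := by
      rw [← Nat.card_coe_set_eq, Nat.card_eq_fintype_card]
    rw [h4, h1, h2, h3]
    omega
  let φr : (Fin n ⊕ Fin p) ≃ ↥brd := Fintype.equivOfCardEq (by simp [hbrdcard])
  set rL : Fin n ⊕ Fin p → Fin m → ℝ := fun j => (φr j : Fin m → ℝ) with hrL
  set r : ((Fin n ⊕ Fin p) ⊕ Fin s) → Fin m → ℝ := Sum.elim rL zR with hr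
  have hrmem : ∀ j : ((Fin n ⊕ Fin p) ⊕ Fin s), r j ∈ br := by
    rintro (j | l)
    · exact ((φr j).2).1
    · exact hzbr (Set.mem_range_self l)
  have hrinj : Function.Injective r := by
    rintro (j | l) (j' | l') h
    · have := φr.injective (Subtype.ext h)
      rw [this]
    · exact absurd ⟨l', h.symm⟩ ((φr j).2).2
    · exact absurd ⟨l, h⟩ ((φr j').2).2
    · rw [hzRli.injective h]
  have hrli : LinearIndependent ℝ r := by
    have heq : r = (fun x : ↥br => (x : Fin m → ℝ)) ∘ (fun j => (⟨r j, hrmem j⟩ : ↥br)) := rfl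
    rw [heq]
    exact hbrli.comp _ (fun a a' hh => hrinj (congrArg Subtype.val hh))
  have hint : ∀ j : ((Fin n ⊕ Fin p) ⊕ Fin s), ∃ w : Fin m → ℤ, (fun i => (w i : ℝ)) = r j := by
    rintro (j | l)
    · obtain ⟨jq, hjq⟩ := hbrdq (φr j).2
      exact ⟨q jq, hjq⟩
    · exact hzint l
  choose W hW using hint
  -- matrices
  set Uu : Matrix ((Fin n ⊕ Fin p) ⊕ Fin s) ((Fin n ⊕ Fin p) ⊕ Fin s) ℝ := Matrix.of (fun k i' => u k (σι i')) with hUu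
  set Mr : Matrix ((Fin n ⊕ Fin p) ⊕ Fin s) ((Fin n ⊕ Fin p) ⊕ Fin s) ℝ := Matrix.of (fun j i' => r j (σι i')) with hMr
  set Wm : Matrix ((Fin n ⊕ Fin p) ⊕ Fin s) ((Fin n ⊕ Fin p) ⊕ Fin s) ℤ := Matrix.of (fun j i' => W j (σι i')) with hWm
  have hMrW : Mr = Wm.map (fun z => (z : ℝ)) := by
    ext j i'
    exact (congrFun (hW j) (σι i')).symm
  set N : Matrix ((Fin n ⊕ Fin p) ⊕ Fin s) ((Fin n ⊕ Fin p) ⊕ Fin s) ℝ := Uu * Mr.transpose with hNdef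
  have hNdet : N.det = Uu.det * Mr.det := by
    rw [hNdef, Matrix.det_mul, Matrix.det_transpose]
  have hN : ∀ k j, N k j = ∑ i, u k i * r j i := by
    intro k j
    simp only [hNdef, Matrix.mul_apply, Matrix.transpose_apply, hUu, hMr, Matrix.of_apply]
    exact Equiv.sum_comp σι (fun i => u k i * r j i)
  set A : Matrix (Fin n ⊕ Fin p) (Fin n ⊕ Fin p) ℝ :=
    Matrix.of (fun k j => ∑ i, ev k i * rL j i) with hA
  set C : Matrix (Fin s) (Fin n ⊕ Fin p) ℝ :=
    Matrix.of (fun l j => ∑ i, zR l i * rL j i) with hC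
  set D : Matrix (Fin s) (Fin s) ℝ :=
    Matrix.of (fun l l' => ∑ i, zR l i * zR l' i) with hD
  have hNblock : N = Matrix.fromBlocks A 0 C D := by
    ext k j
    rcases k with k | k <;> rcases j with j | j <;>
      simp only [Matrix.fromBlocks_apply₁₁, Matrix.fromBlocks_apply₁₂, Matrix.fromBlocks_apply₂₁,
        Matrix.fromBlocks_apply₂₂, hN, Matrix.of_apply, Matrix.zero_apply, hu, hr,
        Sum.elim_inl, Sum.elim_inr, hA, hC, hD]
    exact horth k j
  -- |det Mr| ≥ 1
  have hMrrows : LinearIndependent ℝ (fun j => Mr j) := by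
    have heq : (fun j : ((Fin n ⊕ Fin p) ⊕ Fin s) => Mr j) =
        ((LinearEquiv.funCongrLeft ℝ ℝ σι).toLinearMap : (Fin m → ℝ) →ₗ[ℝ] (((Fin n ⊕ Fin p) ⊕ Fin s) → ℝ)) ∘ r := rfl
    rw [heq]
    exact hrli.map' _ (LinearMap.ker_eq_bot_of_injective
      (LinearEquiv.funCongrLeft ℝ ℝ σι).injective)
  have hMrdet : Mr.det ≠ 0 := my_det_ne_zero_of_rows hMrrows
  have hdet_cast : Mr.det = ((Wm.det : ℤ) : ℝ) := by
    have hmm : Mr = Wm.map ⇑(Int.castRingHom ℝ) := by rw [hMrW]; rfl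
    rw [hmm]
    have hh := RingHom.map_det (Int.castRingHom ℝ) Wm
    simp only [RingHom.mapMatrix_apply] at hh
    rw [← hh]
    simp
  have h1le : (1:ℝ) ≤ |Mr.det| := by
    rw [hdet_cast]
    have hW0 : Wm.det ≠ 0 := by
      intro hc
      apply hMrdet
      rw [hdet_cast, hc, Int.cast_zero]
    have := Int.one_le_abs hW0
    calc (1:ℝ) = ((1:ℤ):ℝ) := by norm_num
      _ ≤ ((|Wm.det| : ℤ) : ℝ) := by exact_mod_cast this
      _ = |((Wm.det : ℤ) : ℝ)| := by push_cast; ring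
  -- bounds for A
  have hrLq : ∀ j, ∃ jq, qR jq = rL j := fun j => hbrdq (φr j).2
  have hrL_norm : ∀ j i, |rL j i| ≤ (Q : ℝ) := by
    intro j i
    obtain ⟨jq, hjq⟩ := hrLq j
    rw [← hjq]
    have h1 : ‖qR jq i‖ ≤ ‖qR jq‖ := norm_le_pi_norm (qR jq) i
    have h2 : supZ (q jq) ≤ (Q:ℝ) := hqn jq
    have h3 : ‖qR jq‖ = supZ (q jq) := rfl
    rw [Real.norm_eq_abs] at h1
    rw [h3] at h1
    linarith
  set rb : (Fin n ⊕ Fin p) → ℝ := Sum.elim β (fun _ => Cv * (Q:ℝ)) with hrb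
  have hrb0 : ∀ k, 0 ≤ rb k := by
    rintro (i | j)
    · exact hβ i
    · have h0 : (0:ℝ) ≤ ∑ i, |ev (Sum.inr j) i| := Finset.sum_nonneg (fun _ _ => abs_nonneg _)
      exact mul_nonneg (h0.trans (hCv j)) (Nat.cast_nonneg Q)
  have hAbound : ∀ k j, |A k j| ≤ rb k := by
    rintro (i | j') j
    · obtain ⟨jq, hjq⟩ := hrLq j
      have heq : A (Sum.inl i) j = ∑ k, (q jq k : ℝ) * e i k := by
        simp only [hA, Matrix.of_apply, ← hjq, hev, hqR]
        exact Finset.sum_congr rfl fun k _ => mul_comm _ _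
      rw [heq]
      exact hqe jq i
    · have hle : |A (Sum.inr j') j| ≤ ∑ i, |ev (Sum.inr j') i| * (Q:ℝ) := by
        have hAval : A (Sum.inr j') j = ∑ i, ev (Sum.inr j') i * rL j i := rfl
        rw [hAval]
        refine (Finset.abs_sum_le_sum_abs _ _).trans ?_
        refine Finset.sum_le_sum fun i _ => ?_
        rw [abs_mul]
        exact mul_le_mul_of_nonneg_left (hrL_norm j i) (abs_nonneg _)
      refine hle.trans ?_
      rw [← Finset.sum_mul]
      exact mul_le_mul_of_nonneg_right (hCv j') (Nat.cast_nonneg Q)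
  have hAdet := my_abs_det_le A rb hrb0 hAbound
  have hprod : ∏ k, rb k = (∏ i, β i) * (Cv * Q)^p := by
    rw [Fintype.prod_sum_type]
    simp [hrb]
  have hcardA : Fintype.card (Fin n ⊕ Fin p) = n + p := by simp
  rw [hcardA, hprod] at hAdet
  -- final chain
  have hchain : |Uu.det| ≤ |Uu.det| * |Mr.det| :=
    le_mul_of_one_le_right (abs_nonneg _) h1le
  have hNabs : |N.det| = |Uu.det| * |Mr.det| := by rw [hNdet, abs_mul]
  have hNabs2 : |N.det| = |A.det| * |D.det| := by
    rw [hNblock, Matrix.det_fromBlocks_zero₁₂, abs_mul]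
  calc |Uu.det| ≤ |Uu.det| * |Mr.det| := hchain
    _ = |A.det| * |D.det| := by rw [← hNabs, hNabs2]
    _ ≤ ((Nat.factorial (n + p)) * ((∏ i, β i) * (Cv * Q)^p)) * |D.det| :=
        mul_le_mul_of_nonneg_right hAdet (abs_nonneg _)
    _ = (Nat.factorial (n + p)) * ((∏ i, β i) * (Cv * Q)^p) * |D.det| := by ring

theorem stmt3 (m n : ℕ) (hn : 0 < n) (hmn : n < m)
    (e : Fin n → Fin m → ℝ) (he : LinearIndependent ℝ e)
    (τ : Fin n → ℝ) (hτ : ∀ i, 0 < τ i)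
    (ε : ℕ → ℝ) (hε : Tendsto ε atTop (nhds 0))
    (H : {Q : ℕ | 0 < Q ∧ ∃ q : Fin m → (Fin m → ℤ),
      LinearIndependent ℝ (fun j => fun i => ((q j i : ℝ))) ∧
      ∀ j, supZ (q j) ≤ Q ∧
        ∀ i, |∑ k, (q j k : ℝ) * e i k| ≤ (Q : ℝ) ^ (-(τ i) + ε Q)}.Infinite)
    (F : Submodule ℝ (Fin m → ℝ)) (hF : DefinedOverQ F) (heF : ∀ i, e i ∈ F) :
    (n : ℝ) + ∑ i, τ i ≤ Module.finrank ℝ F := by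
  classical
  obtain ⟨B, hBrat, hFB⟩ := hF
  set d := Module.finrank ℝ F with hd
  have hdn : n ≤ d := by
    have he' : LinearIndependent ℝ (fun i => (⟨e i, heF i⟩ : F)) :=
      LinearIndependent.of_comp F.subtype he
    simpa using he'.fintype_card_le_finrank
  have hdm : d ≤ m := by
    have h1 := Submodule.finrank_le F
    simpa using h1
  set p := d - n with hp
  set s := m - d with hs
  have hm' : (n + p) + s = m := by omega
  -- rational basis of F
  obtain ⟨bc, hbcB, hbcspan, hbcli⟩ := exists_linearIndependent ℝ B
  have hbcspanF : Submodule.span ℝ bc = F := by rw [hbcspan, ← hFB]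
  haveI : Fintype ↥bc := hbcli.setFinite.fintype
  have hbccard : Fintype.card ↥bc = d := by
    have h1 := finrank_span_set_eq_card hbcli
    rw [hbcspanF] at h1
    rw [← Set.toFinset_card, ← h1]
  let ec : Fin d ≃ ↥bc := (Fintype.equivFinOfCardEq hbccard).symm
  set c : Fin d → (Fin m → ℝ) := fun l => (ec l : Fin m → ℝ) with hc
  have hcrat : ∀ l i, ∃ a : ℚ, c l i = (a : ℝ) := fun l i => hBrat _ (hbcB (ec l).2) i
  choose cq hcq using hcrat
  have hFc : F = Submodule.span ℝ (Set.range c) := by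
    have hrc : Set.range c = bc := by
      rw [hc, show (fun l => ((ec l : Fin m → ℝ))) = Subtype.val ∘ ec from rfl, Set.range_comp]
      simp
    rw [hrc, hbcspanF]
  -- ℚ kernel
  set Φ := (Matrix.of (fun l i => cq l i) : Matrix (Fin d) (Fin m) ℚ).mulVecLin with hΦ
  have hker : s ≤ Module.finrank ℚ (LinearMap.ker Φ) := by
    have h1 := LinearMap.finrank_range_add_finrank_ker Φ
    have h2 : Module.finrank ℚ (LinearMap.range Φ) ≤ d := by
      have h2' := Submodule.finrank_le (LinearMap.range Φ)
      simpa using h2'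
    have h3 : Module.finrank ℚ (Fin m → ℚ) = m := by simp
    omega
  let bk := Module.finBasis ℚ ↥(LinearMap.ker Φ)
  set yq : Fin s → (Fin m → ℚ) := fun l => ((bk (Fin.castLE hker l) : Fin m → ℚ)) with hyq
  have hyqli : LinearIndependent ℚ yq := by
    have h1 : LinearIndependent ℚ (fun l : Fin s => bk (Fin.castLE hker l)) :=
      bk.linearIndependent.comp _ (Fin.castLE_injective hker)
    exact h1.map' (LinearMap.ker Φ).subtype (Submodule.ker_subtype _)
  have hyker : ∀ l, Φ (yq l) = 0 := fun l => (bk (Fin.castLE hker l)).2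
  -- clear denominators
  set Dl : Fin s → ℕ := fun l => ∏ i, (yq l i).den with hDl
  have hDlpos : ∀ l, (0:ℚ) < (Dl l : ℚ) := by
    intro l
    have h1 : 0 < Dl l := Finset.prod_pos (fun i _ => (yq l i).pos)
    exact_mod_cast h1
  set zq : Fin s → (Fin m → ℚ) := fun l => (Dl l : ℚ) • yq l with hzq
  have hzqli : LinearIndependent ℚ zq := by
    have h := hyqli.units_smul (fun l => Units.mk0 ((Dl l : ℚ)) (ne_of_gt (hDlpos l)))
    have heq : zq = (fun l => Units.mk0 ((Dl l : ℚ)) (ne_of_gt (hDlpos l))) • yq := by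
      funext l
      simp [hzq, Units.smul_def]
    rw [heq]
    exact h
  have hzint : ∀ l i, ∃ w : ℤ, zq l i = (w : ℚ) := by
    intro l i
    have hdvd : (yq l i).den ∣ Dl l := Finset.dvd_prod_of_mem _ (Finset.mem_univ i)
    obtain ⟨cc, hcc⟩ := hdvd
    refine ⟨(yq l i).num * cc, ?_⟩
    have h1 : zq l i = yq l i * (Dl l : ℚ) := by simp [hzq, mul_comm]
    rw [h1, hcc]
    push_cast
    rw [← mul_assoc, Rat.mul_den_eq_num]
  have hzker : ∀ l l', ∑ i, cq l' i * zq l i = 0 := by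
    intro l l'
    have h1 : ∑ i, cq l' i * yq l i = 0 := by
      have h2 := congrFun (hyker l) l'
      simpa [hΦ, Matrix.mulVecLin_apply, Matrix.mulVec, dotProduct] using h2
    calc ∑ i, cq l' i * zq l i = (Dl l : ℚ) * ∑ i, cq l' i * yq l i := by
          rw [Finset.mul_sum]
          refine Finset.sum_congr rfl fun i _ => ?_
          simp [hzq]
          ring
      _ = 0 := by rw [h1, mul_zero]
  set zR : Fin s → (Fin m → ℝ) := fun l i => ((zq l i : ℝ)) with hzR
  have hzRli : LinearIndependent ℝ zR := my_rat_indep_to_real hzqli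
  have hzRint : ∀ l, ∃ w : Fin m → ℤ, (fun i => (w i : ℝ)) = zR l := by
    intro l
    choose w hw using hzint l
    refine ⟨w, ?_⟩
    funext i
    show ((w i : ℤ) : ℝ) = ((zq l i : ℚ) : ℝ)
    rw [hw i]
    norm_cast
  -- orthogonality: everything in F is orthogonal to zR
  have horthF : ∀ l, ∀ x ∈ F, ∑ i, x i * zR l i = 0 := by
    intro l
    have hc0 : ∀ l', ∑ i, c l' i * zR l i = 0 := by
      intro l'
      have h1 := hzker l l'
      have h2 : ((∑ i, cq l' i * zq l i : ℚ) : ℝ) = 0 := by rw [h1]; norm_num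
      push_cast at h2
      rw [← h2]
      refine Finset.sum_congr rfl fun i _ => ?_
      rw [hcq l' i, hzR]
    let g : (Fin m → ℝ) →ₗ[ℝ] ℝ :=
      { toFun := fun x => ∑ i, x i * zR l i
        map_add' := fun a b => by simp [add_mul, Finset.sum_add_distrib]
        map_smul' := fun t a => by simp [Finset.mul_sum, mul_assoc] }
    intro x hx
    have hFker : F ≤ LinearMap.ker g := by
      rw [hFc, Submodule.span_le]
      rintro _ ⟨l', rfl⟩
      simp only [SetLike.mem_coe, LinearMap.mem_ker]
      exact hc0 l'
    exact LinearMap.mem_ker.mp (hFker hx)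
  -- extension of e to a "basis family" of F
  have heFset : Set.range e ⊆ (F : Set (Fin m → ℝ)) := by rintro x ⟨i, rfl⟩; exact heF i
  obtain ⟨bv, hbvF, hebv, hFbv, hbvli⟩ :=
    exists_linearIndepOn_id_extension ((linearIndepOn_id_range_iff he.injective).mpr he) heFset
  have hbvspan : Submodule.span ℝ bv = F :=
    le_antisymm (Submodule.span_le.mpr hbvF) (fun x hx => hFbv hx)
  haveI : Fintype ↥bv := hbvli.setFinite.fintype
  have hbvcard : Fintype.card ↥bv = d := by
    have h1 := finrank_span_set_eq_card hbvli
    rw [hbvspan] at h1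
    rw [← Set.toFinset_card, ← h1]
  set bvd := bv \ Set.range e with hbvd
  haveI : Fintype ↥bvd := (hbvli.setFinite.diff).fintype
  have hbvdcard : Fintype.card ↥bvd = p := by
    have h1 : bvd.ncard = bv.ncard - (Set.range e).ncard :=
      Set.ncard_diff hebv (Set.finite_range e)
    have h2 : bv.ncard = d := by
      rw [← Nat.card_coe_set_eq, Nat.card_eq_fintype_card, hbvcard]
    have h3 : (Set.range e).ncard = n := by
      rw [← Set.image_univ, Set.ncard_image_of_injective _ he.injective]
      simp [Set.ncard_univ]
    have h4 : Fintype.card ↥bvd = bvd.ncard := by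
      rw [← Nat.card_coe_set_eq, Nat.card_eq_fintype_card]
    rw [h4, h1, h2, h3]
  let φv : Fin p ≃ ↥bvd := (Fintype.equivFinOfCardEq hbvdcard).symm
  set ev : (Fin n ⊕ Fin p) → (Fin m → ℝ) := Sum.elim e (fun j => (φv j : Fin m → ℝ)) with hevdef
  have hevF : ∀ k, ev k ∈ F := by
    rintro (i | j)
    · exact heF i
    · exact hbvF ((φv j).2.1)
  have hevli : LinearIndependent ℝ ev := by
    have hmem : ∀ k, ev k ∈ bv := by
      rintro (i | j)
      · exact hebv ⟨i, rfl⟩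
      · exact (φv j).2.1
    have hinj : Function.Injective (fun k => (⟨ev k, hmem k⟩ : ↥bv)) := by
      rintro (i | j) (i' | j') h
      all_goals simp only [Subtype.mk.injEq, hevdef, Sum.elim_inl, Sum.elim_inr] at h
      · rw [he.injective h]
      · exact absurd ⟨i, h⟩ (φv j').2.2
      · exact absurd ⟨i', h.symm⟩ (φv j).2.2
      · rw [show j = j' from φv.injective (Subtype.ext h)]
    have heq : ev = (fun x : ↥bv => (x : Fin m → ℝ)) ∘ (fun k => (⟨ev k, hmem k⟩ : ↥bv)) := rfl
    rw [heq]
    exact hbvli.comp _ hinj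
  -- u family linear independent
  have huli : LinearIndependent ℝ (Sum.elim ev zR) := by
    refine LinearIndependent.sum_type hevli hzRli ?_
    rw [Submodule.disjoint_def]
    intro x hxe hxz
    have hxF : x ∈ F := by
      have hle : Submodule.span ℝ (Set.range ev) ≤ F := by
        rw [Submodule.span_le]; rintro _ ⟨k, rfl⟩; exact hevF k
      exact hle hxe
    obtain ⟨cf, hcf⟩ := (Submodule.mem_span_range_iff_exists_fun ℝ).mp hxz
    have hdot : ∑ i, x i * x i = 0 := by
      calc ∑ i, x i * x i = ∑ i, x i * (∑ l, cf l * zR l i) := by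
            refine Finset.sum_congr rfl fun i _ => ?_
            congr 1
            rw [← hcf]
            simp [Finset.sum_apply]
        _ = ∑ l : Fin s, cf l * (∑ i, x i * zR l i) := by
            simp_rw [Finset.mul_sum]
            rw [Finset.sum_comm]
            refine Finset.sum_congr rfl fun l _ => Finset.sum_congr rfl fun i _ => by ring
        _ = 0 := by
            refine Finset.sum_eq_zero fun l _ => ?_
            rw [horthF l x hxF, mul_zero]
    funext i
    have h0 := (Finset.sum_eq_zero_iff_of_nonneg
      (fun i _ => mul_self_nonneg (x i))).mp hdot i (Finset.mem_univ i)
    exact mul_self_eq_zero.mp h0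
  -- the fixed matrices and constants
  have hcardι : Fintype.card ((Fin n ⊕ Fin p) ⊕ Fin s) = m := by
    simp only [Fintype.card_sum, Fintype.card_fin]
    omega
  let σι : ((Fin n ⊕ Fin p) ⊕ Fin s) ≃ Fin m := Fintype.equivFinOfCardEq hcardι
  set Uu : Matrix ((Fin n ⊕ Fin p) ⊕ Fin s) ((Fin n ⊕ Fin p) ⊕ Fin s) ℝ :=
    Matrix.of (fun k i' => Sum.elim ev zR k (σι i')) with hUu
  have hUudet : Uu.det ≠ 0 := by
    apply my_det_ne_zero_of_rows
    have heq : (fun k => Uu k) =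
        ((LinearEquiv.funCongrLeft ℝ ℝ σι).toLinearMap :
          (Fin m → ℝ) →ₗ[ℝ] (((Fin n ⊕ Fin p) ⊕ Fin s) → ℝ)) ∘ (Sum.elim ev zR) := rfl
    rw [heq]
    exact huli.map' _ (LinearMap.ker_eq_bot_of_injective
      (LinearEquiv.funCongrLeft ℝ ℝ σι).injective)
  set cU := |Uu.det| with hcU
  have hcUpos : 0 < cU := abs_pos.mpr hUudet
  set cD := |Matrix.det (Matrix.of (fun k l : Fin s => ∑ i, zR k i * zR l i))| with hcD
  have hcD0 : 0 ≤ cD := abs_nonneg _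
  set Cv : ℝ := 1 + ∑ j : Fin p, ∑ i, |ev (Sum.inr j) i| with hCvdef
  have hCvb : ∀ j : Fin p, ∑ i, |ev (Sum.inr j) i| ≤ Cv := by
    intro j
    rw [hCvdef]
    have h1 : ∑ i, |ev (Sum.inr j) i| ≤ ∑ j' : Fin p, ∑ i, |ev (Sum.inr j') i| :=
      Finset.single_le_sum (f := fun j' : Fin p => ∑ i, |ev (Sum.inr j') i|)
        (fun j' _ => Finset.sum_nonneg fun i _ => abs_nonneg _) (Finset.mem_univ j)
    linarith
  have hCv0 : 0 ≤ Cv := by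
    rw [hCvdef]
    have h1 : (0:ℝ) ≤ ∑ j' : Fin p, ∑ i, |ev (Sum.inr j') i| :=
      Finset.sum_nonneg fun j' _ => Finset.sum_nonneg fun i _ => abs_nonneg _
    linarith
  set K := (Nat.factorial (n + p) : ℝ) * Cv ^ p * cD with hK
  have hK0 : 0 ≤ K :=
    mul_nonneg (mul_nonneg (Nat.cast_nonneg _) (pow_nonneg hCv0 p)) hcD0
  -- contradiction setup
  by_contra hcon
  push_neg at hcon
  set T := ∑ i, τ i with hT
  set δ := (n:ℝ) + T - d with hδ
  have hδpos : 0 < δ := by rw [hδ]; linarith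
  have hev1 : ∀ᶠ Q : ℕ in atTop, (n:ℝ) * ε Q ≤ δ/2 := by
    have hn' : (0:ℝ) < n := by exact_mod_cast hn
    have h1 : ∀ᶠ Q in atTop, ε Q < δ/(2*n) := hε.eventually_lt_const (by positivity)
    filter_upwards [h1] with Q hQ
    have h2 : (n:ℝ) * ε Q ≤ (n:ℝ) * (δ/(2*n)) :=
      mul_le_mul_of_nonneg_left hQ.le hn'.le
    have h3 : (n:ℝ) * (δ/(2*n)) = δ/2 := by
      field_simp
    linarith
  have hev2 : ∀ᶠ Q : ℕ in atTop, K * ((Q:ℝ) ^ (-(δ/2))) < cU := by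
    have h3 : Tendsto (fun x : ℝ => x ^ (-(δ/2))) atTop (nhds 0) :=
      tendsto_rpow_neg_atTop (by positivity)
    have h4 : Tendsto (fun Q : ℕ => K * ((Q:ℝ) ^ (-(δ/2)))) atTop (nhds 0) := by
      have h5 := (h3.comp tendsto_natCast_atTop_atTop).const_mul K
      simpa using h5
    exact h4.eventually_lt_const hcUpos
  obtain ⟨Q₀, hQ₀⟩ := Filter.eventually_atTop.mp (hev1.and hev2)
  obtain ⟨Q, hQS, hQgt⟩ := H.exists_gt Q₀
  obtain ⟨hQpos, q, hqli, hq⟩ := hQS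
  have hQR0 : (0:ℝ) < Q := by exact_mod_cast hQpos
  have hQ1 : (1:ℝ) ≤ Q := by exact_mod_cast hQpos
  have hkey := my_key hm' e ev (fun i => rfl) zR hzRint huli
      (fun k l => horthF l (ev k) (hevF k))
      σι Cv hCvb (fun i => (Q:ℝ) ^ (-(τ i) + ε Q))
      (fun i => Real.rpow_nonneg (le_of_lt hQR0) _)
      Q q hqli (fun j => (hq j).1) (fun j i => (hq j).2 i)
  -- massage RHS
  have hprod : (∏ i, (Q:ℝ) ^ (-(τ i) + ε Q)) = (Q:ℝ) ^ (∑ i, (-(τ i) + ε Q)) :=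
    (Real.rpow_sum_of_pos hQR0 _ _).symm
  have hsum : ∑ i, (-(τ i) + ε Q) = -T + (n:ℝ) * ε Q := by
    rw [Finset.sum_add_distrib, Finset.sum_const, Finset.card_univ, Fintype.card_fin,
      nsmul_eq_mul, hT, ← Finset.sum_neg_distrib]
  have hpow : ((Cv * Q)^p : ℝ) = Cv^p * (Q:ℝ)^(p:ℝ) := by
    rw [mul_pow, Real.rpow_natCast]
  have hexp : (Q:ℝ) ^ (-T + (n:ℝ) * ε Q) * (Q:ℝ)^(p:ℝ) = (Q:ℝ) ^ ((p:ℝ) - T + (n:ℝ) * ε Q) := by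
    rw [← Real.rpow_add hQR0]
    ring_nf
  have hineq : cU ≤ K * (Q:ℝ) ^ ((p:ℝ) - T + (n:ℝ) * ε Q) := by
    have hRHS : ((Nat.factorial (n + p)) : ℝ) *
        ((∏ i, (Q:ℝ) ^ (-(τ i) + ε Q)) * (Cv * Q)^p) *
        |Matrix.det (Matrix.of (fun k l : Fin s => ∑ i, zR k i * zR l i))|
        = K * (Q:ℝ) ^ ((p:ℝ) - T + (n:ℝ) * ε Q) := by
      rw [hprod, hsum, hpow, ← hexp, hK]
      ring
    rw [← hRHS]
    exact hkey
  have hexple : (p:ℝ) - T + (n:ℝ) * ε Q ≤ -(δ/2) := by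
    have hp' : (p:ℝ) = (d:ℝ) - (n:ℝ) := by
      rw [hp]
      push_cast [Nat.cast_sub hdn]
      ring
    have h5 := (hQ₀ Q (le_of_lt hQgt)).1
    rw [hp']
    rw [hδ] at h5 ⊢
    linarith
  have hmono : (Q:ℝ) ^ ((p:ℝ) - T + (n:ℝ) * ε Q) ≤ (Q:ℝ) ^ (-(δ/2)) :=
    Real.rpow_le_rpow_of_exponent_le hQ1 hexple
  have hfin : cU ≤ K * (Q:ℝ) ^ (-(δ/2)) :=
    hineq.trans (mul_le_mul_of_nonneg_left hmono hK0)
  have h6 := (hQ₀ Q (le_of_lt hQgt)).2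
  linarith
end

section
/- For almost every real number ξ (with respect to Lebesgue measure) and every real β > 1, there exist constants c, C > 0 such that for every sufficiently large integer Q there exist two linearly independent vectors q = (q₁, q₂) ∈ ℤ² with max(|q₁|, |q₂|) ≤ C·Q and c·Q^{−1}(log Q)^{−β} ≤ |q₁ξ − q₂| ≤ C·Q^{−1}(log Q)^{β}. -/
open MeasureTheory Filter Real Set


lemma bertrand_summable {β : ℝ} (hβ : 1 < β) :
    Summable (fun q : ℕ => ((q : ℝ) * Real.log q ^ β)⁻¹) := by
  set f : ℕ → ℝ := fun q => ((q : ℝ) * Real.log q ^ β)⁻¹ with hf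
  have hl2 : (0:ℝ) < Real.log 2 := Real.log_pos (by norm_num)
  have hβ0 : (0:ℝ) ≤ β := by linarith
  have hfval : ∀ q : ℕ, 2 ≤ q → f q = ((q : ℝ) * Real.log q ^ β)⁻¹ := fun q _ => rfl
  have hfpos : ∀ q : ℕ, 2 ≤ q → 0 < f q := by
    intro q hq
    have h1 : (2:ℝ) ≤ (q:ℝ) := by exact_mod_cast hq
    have h2 : (0:ℝ) < Real.log q := Real.log_pos (by linarith)
    have : (0:ℝ) < (q:ℝ) * Real.log q ^ β := by positivity
    exact inv_pos.mpr this
  have hfanti : ∀ m n : ℕ, 2 ≤ m → m ≤ n → f n ≤ f m := by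
    intro m n hm hmn
    have h1 : (2:ℝ) ≤ (m:ℝ) := by exact_mod_cast hm
    have h1' : (m:ℝ) ≤ (n:ℝ) := by exact_mod_cast hmn
    have h2 : (0:ℝ) < Real.log m := Real.log_pos (by linarith)
    apply inv_anti₀ (by positivity)
    have h3 : Real.log m ≤ Real.log n := Real.log_le_log (by linarith) h1'
    gcongr
  have hfnonneg : ∀ q, 0 ≤ f q := by
    intro q
    apply inv_nonneg.mpr
    have : (0:ℝ) ≤ Real.log q := Real.log_natCast_nonneg q
    positivity
  set F : ℕ → ℝ := fun q => if q < 2 then f 2 else f q with hF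
  have hFnonneg : ∀ q, 0 ≤ F q := by
    intro q; simp only [hF]; split_ifs <;> exact hfnonneg _
  have hmono : ∀ ⦃m n : ℕ⦄, 0 < m → m ≤ n → F n ≤ F m := by
    intro m n _ hmn
    rcases lt_or_ge n 2 with hn2 | hn2
    · simp only [hF, hn2, lt_of_le_of_lt hmn hn2, if_true, le_refl]
    · have hFn : F n = f n := by simp only [hF, not_lt.mpr hn2, if_false]
      rcases lt_or_ge m 2 with hm2 | hm2
      · have hFm : F m = f 2 := by simp only [hF, hm2, if_true]
        rw [hFn, hFm]; exact hfanti 2 n le_rfl hn2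
      · have hFm : F m = f m := by simp only [hF, not_lt.mpr hm2, if_false]
        rw [hFn, hFm]; exact hfanti m n hm2 hmn
  have hFsum : Summable F := by
    rw [← summable_condensed_iff_of_nonneg hFnonneg hmono]
    rw [← summable_nat_add_iff 1]
    have key : ∀ n : ℕ, (2:ℝ) ^ (n+1) * F (2 ^ (n+1)) =
        (Real.log 2 ^ β)⁻¹ * (((n:ℝ)+1) ^ (-β) : ℝ) := by
      intro n
      have h2n : ¬ ((2:ℕ) ^ (n+1) < 2) := by
        push_neg
        calc 2 = 2 ^ 1 := (pow_one 2).symm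
        _ ≤ 2 ^ (n+1) := Nat.pow_le_pow_right (by norm_num) (by omega)
      have hn0 : (0:ℝ) < (n:ℝ) + 1 := by positivity
      simp only [hF, hf, h2n, if_false]
      have hlog : Real.log (((2:ℕ) ^ (n+1) : ℕ) : ℝ) = ((n:ℝ)+1) * Real.log 2 := by
        push_cast
        rw [Real.log_pow]
        push_cast; ring
      rw [hlog, Real.mul_rpow hn0.le hl2.le]
      have h2e : (((2:ℕ) ^ (n+1) : ℕ) : ℝ) = (2:ℝ) ^ (n+1) := by push_cast; ring
      rw [h2e, Real.rpow_neg hn0.le]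
      have hp : (0:ℝ) < (2:ℝ) ^ (n+1) := by positivity
      field_simp
    rw [summable_congr key]
    have : Summable (fun n : ℕ => (((n:ℕ):ℝ)+1) ^ (-β)) := by
      have := Real.summable_nat_rpow (p := -β) |>.mpr (by linarith)
      have h := (summable_nat_add_iff 1).mpr this
      apply h.congr
      intro n; push_cast; ring_nf
    exact this.mul_left _
  apply Summable.of_nonneg_of_le hfnonneg (fun n => ?_) hFsum
  rcases lt_or_ge n 2 with h | h
  · have : f n = 0 := by
      interval_cases n <;>
        simp [hf, Real.log_one, Real.zero_rpow (by linarith : β ≠ 0)]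
    rw [this]; exact hFnonneg n
  · simp only [hF, not_lt.mpr h, if_false, le_refl]


lemma round_min (x : ℝ) (p : ℤ) : |x - round x| ≤ |x - p| := by
  rcases eq_or_ne p (round x) with h | h
  · rw [h]
  · have h1 : |x - round x| ≤ 1/2 := abs_sub_round x
    have h2 : (1:ℝ) ≤ |(p:ℝ) - round x| := by
      have : p - round x ≠ 0 := sub_ne_zero.mpr (by exact_mod_cast h)
      have h3 : (1:ℤ) ≤ |p - round x| := Int.one_le_abs (by exact_mod_cast this)
      calc (1:ℝ) = ((1:ℤ):ℝ) := by norm_num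
      _ ≤ ((|p - round x| : ℤ) : ℝ) := by exact_mod_cast h3
      _ = |(p:ℝ) - round x| := by push_cast; ring_nf
    have := abs_sub_abs_le_abs_sub ((p:ℝ) - round x) (x - round x)
    have h4 : |(p:ℝ) - round x - (x - round x)| = |x - p| := by
      rw [abs_sub_comm]; congr 1; ring
    nlinarith [abs_nonneg (x - (p:ℝ)), abs_nonneg (x - (round x : ℤ))]


lemma log_three_gt_one : (1:ℝ) < Real.log 3 := by
  rw [Real.lt_log_iff_exp_lt (by norm_num)]
  calc Real.exp 1 < 2.7182818286 := Real.exp_one_lt_d9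
  _ < 3 := by norm_num

lemma eps_le (β : ℝ) (hβ : 1 < β) {q : ℕ} (hq : 3 ≤ q) :
    ((q:ℝ) * Real.log q ^ β)⁻¹ ≤ 1/3 := by
  have h3 : (3:ℝ) ≤ (q:ℝ) := by exact_mod_cast hq
  have hl : (1:ℝ) ≤ Real.log q :=
    le_trans log_three_gt_one.le (Real.log_le_log (by norm_num) h3)
  have hlb : (1:ℝ) ≤ Real.log q ^ β := Real.one_le_rpow hl (by linarith)
  rw [inv_le_comm₀ (by positivity) (by norm_num)]
  have : ((1:ℝ)/3)⁻¹ = 3 := by norm_num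
  rw [this]
  nlinarith

lemma ae_lower_interval (β : ℝ) (hβ : 1 < β) (m : ℤ) :
    ∀ᵐ ξ ∂(volume : Measure ℝ), ∀ᶠ q : ℕ in atTop, ∀ p : ℤ,
      ξ ∈ Set.Ico (m:ℝ) (m+1) → ((q:ℝ) * Real.log q ^ β)⁻¹ ≤ |(q:ℝ) * ξ - p| := by
  set ε : ℕ → ℝ := fun q => ((q:ℝ) * Real.log q ^ β)⁻¹ with hε
  have hεnonneg : ∀ q, 0 ≤ ε q := by
    intro q
    apply inv_nonneg.mpr
    have := Real.log_natCast_nonneg q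
    positivity
  set s : ℕ → Set ℝ := fun q =>
    if q < 3 then ∅ else {ξ | ξ ∈ Set.Ico (m:ℝ) (m+1) ∧ ∃ p : ℤ, |(q:ℝ) * ξ - p| < ε q}
    with hs
  have hsub : ∀ q : ℕ, 3 ≤ q → s q ⊆
      ⋃ p ∈ Finset.Icc (m*q - 1) (m*q + q + 1),
        Set.Ioo (((p:ℝ) - ε q)/q) (((p:ℝ) + ε q)/q) := by
    intro q hq ξ hξ
    rw [hs] at hξ
    simp only [not_lt.mpr hq, if_false, Set.mem_setOf_eq] at hξ
    obtain ⟨⟨hm1, hm2⟩, p, hp⟩ := hξ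
    have hq0 : (0:ℝ) < q := by positivity
    have hε1 : ε q ≤ 1 := le_trans (eps_le β hβ hq) (by norm_num)
    have hql : (3:ℝ) ≤ (q:ℝ) := by exact_mod_cast hq
    have hb1 : (m:ℝ) * q - 1 ≤ (p:ℝ) := by
      have : (q:ℝ) * ξ - p ≤ |((q:ℝ) * ξ - p)| := le_abs_self _
      nlinarith [abs_lt.mp hp]
    have hb2 : (p:ℝ) ≤ (m:ℝ) * q + q + 1 := by
      nlinarith [abs_lt.mp hp]
    simp only [Set.mem_iUnion, Finset.mem_Icc]
    refine ⟨p, ⟨?_, ?_⟩, ?_⟩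
    · exact_mod_cast (by push_cast; linarith : ((m*q - 1 : ℤ):ℝ) ≤ (p:ℝ))
    · exact_mod_cast (by push_cast; linarith : ((p:ℤ):ℝ) ≤ ((m*q + q + 1 : ℤ):ℝ))
    · constructor
      · rw [div_lt_iff₀ hq0]
        nlinarith [abs_lt.mp hp]
      · rw [lt_div_iff₀ hq0]
        nlinarith [abs_lt.mp hp]
  have hmeas : ∀ q : ℕ, volume (s q) ≤ ENNReal.ofReal (4 * ε q) := by
    intro q
    rcases lt_or_ge q 3 with hq | hq
    · simp [hs, hq]
    · refine le_trans (measure_mono (hsub q hq)) ?_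
      refine le_trans (measure_biUnion_finset_le _ _) ?_
      have hvol : ∀ p : ℤ, volume (Set.Ioo (((p:ℝ) - ε q)/q) (((p:ℝ) + ε q)/q)) =
          ENNReal.ofReal (2 * ε q / q) := by
        intro p
        rw [Real.volume_Ioo]
        congr 1
        have hq0 : (0:ℝ) < q := by positivity
        field_simp
        ring
      rw [Finset.sum_congr rfl (fun p _ => hvol p)]
      rw [Finset.sum_const]
      have hcard : (Finset.Icc (m*q - 1) (m*q + q + 1)).card = q + 3 := by
        rw [Int.card_Icc]
        omega
      rw [hcard, nsmul_eq_mul]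
      have hq0 : (0:ℝ) < q := by positivity
      calc ((q+3 : ℕ) : ENNReal) * ENNReal.ofReal (2 * ε q / q)
          = ENNReal.ofReal ((q+3 : ℕ) * (2 * ε q / q)) := by
            rw [ENNReal.ofReal_mul (by positivity)]
            congr 1
            rw [ENNReal.ofReal_natCast]
      _ ≤ ENNReal.ofReal (4 * ε q) := by
            apply ENNReal.ofReal_le_ofReal
            have h1 : ((q+3:ℕ):ℝ) = (q:ℝ) + 3 := by push_cast; ring
            rw [h1]
            have h2 : (3:ℝ) ≤ (q:ℝ) := by exact_mod_cast hq
            have h3 : ((q:ℝ)+3) * (2 * ε q / (q:ℝ)) = (((q:ℝ)+3) * (2*ε q))/(q:ℝ) := by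
              ring
            rw [h3, div_le_iff₀ hq0]
            nlinarith [hεnonneg q]
  have htsum : (∑' q, volume (s q)) ≠ ⊤ := by
    apply ne_top_of_le_ne_top _ (ENNReal.tsum_le_tsum hmeas)
    rw [← ENNReal.ofReal_tsum_of_nonneg (fun q => by positivity)
      ((bertrand_summable hβ).mul_left 4)]
    exact ENNReal.ofReal_ne_top
  filter_upwards [MeasureTheory.ae_eventually_notMem htsum] with ξ hξ
  filter_upwards [hξ, Filter.eventually_ge_atTop 3] with q hq hq3
  intro p hmem
  by_contra hcon
  push_neg at hcon
  apply hq
  rw [hs]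
  simp only [not_lt.mpr hq3, if_false, Set.mem_setOf_eq]
  exact ⟨hmem, p, hcon⟩


set_option maxHeartbeats 2000000 in
lemma main_det (ξ : ℝ) (hirr : Irrational ξ) (β β' : ℝ) (hβ'1 : 1 < β') (hβ'β : β' ≤ β)
    (q₀ : ℕ)
    (H : ∀ q : ℕ, q₀ ≤ q → ∀ p : ℤ, ((q:ℝ) * Real.log q ^ β')⁻¹ ≤ |(q:ℝ)*ξ - p|) :
    ∃ c > (0:ℝ), ∃ C > (0:ℝ), ∃ Q₀ : ℕ, ∀ Q : ℕ, Q₀ ≤ Q →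
      ∃ q q' : ℤ × ℤ,
        (q.1 * q'.2 - q.2 * q'.1 ≠ 0) ∧
        (max |(q.1 : ℝ)| |(q.2 : ℝ)| ≤ C * Q ∧
          c * (Q : ℝ)⁻¹ * Real.log Q ^ (-β) ≤ |(q.1 : ℝ) * ξ - (q.2 : ℝ)| ∧
          |(q.1 : ℝ) * ξ - (q.2 : ℝ)| ≤ C * (Q : ℝ)⁻¹ * Real.log Q ^ β) ∧
        (max |(q'.1 : ℝ)| |(q'.2 : ℝ)| ≤ C * Q ∧
          c * (Q : ℝ)⁻¹ * Real.log Q ^ (-β) ≤ |(q'.1 : ℝ) * ξ - (q'.2 : ℝ)| ∧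
          |(q'.1 : ℝ) * ξ - (q'.2 : ℝ)| ≤ C * (Q : ℝ)⁻¹ * Real.log Q ^ β) := by
  -- the distance-to-nearest-integer function
  set g : ℤ → ℝ := fun q => |(q:ℝ)*ξ - round ((q:ℝ)*ξ)| with hg
  have hgle : ∀ (q p : ℤ), g q ≤ |(q:ℝ)*ξ - p| := fun q p => round_min _ p
  have hgpos : ∀ q : ℤ, q ≠ 0 → 0 < g q := by
    intro q hq
    rcases lt_or_eq_of_le (abs_nonneg ((q:ℝ)*ξ - round ((q:ℝ)*ξ))) with h | h
    · exact h
    · exfalso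
      have h0 : (q:ℝ)*ξ - round ((q:ℝ)*ξ) = 0 := by
        have := abs_eq_zero.mp h.symm; exact this
      have hq0 : (q:ℝ) ≠ 0 := by exact_mod_cast hq
      have : ξ = (round ((q:ℝ)*ξ) : ℝ) / (q:ℝ) := by rw [eq_div_iff hq0]; linarith
      exact (irrational_iff_ne_rational ξ).mp hirr (round ((q:ℝ)*ξ)) q hq (by push_cast at this ⊢; exact this)
  set q₁ : ℕ := max q₀ 3 with hq₁
  have hq₁3 : 3 ≤ q₁ := le_max_right _ _
  -- minimum over small q
  have hne : (Finset.Icc (1:ℤ) (q₁ - 1)).Nonempty := by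
    refine ⟨1, Finset.mem_Icc.mpr ⟨le_rfl, ?_⟩⟩
    have : (3:ℤ) ≤ (q₁:ℤ) := by exact_mod_cast hq₁3
    omega
  set T₀ := (Finset.Icc (1:ℤ) (q₁ - 1)).image g with hT₀
  have hT₀ne : T₀.Nonempty := hne.image g
  set δ : ℝ := T₀.min' hT₀ne with hδ
  have hδpos : 0 < δ := by
    rw [hδ]
    apply (Finset.lt_min'_iff _ _).mpr
    intro y hy
    rw [hT₀] at hy
    obtain ⟨q, hqmem, rfl⟩ := Finset.mem_image.mp hy
    have := Finset.mem_Icc.mp hqmem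
    exact hgpos q (by omega)
  have hδle : ∀ q : ℤ, 1 ≤ q → q ≤ (q₁:ℤ) - 1 → δ ≤ g q := by
    intro q h1 h2
    apply Finset.min'_le
    exact Finset.mem_image_of_mem g (Finset.mem_Icc.mpr ⟨h1, h2⟩)
  set c : ℝ := 1 with hc
  set C : ℝ := |ξ| + 1 with hC
  have hC1 : (1:ℝ) ≤ C := by rw [hC]; linarith [abs_nonneg ξ]
  have hcpos : (0:ℝ) < c := by rw [hc]; norm_num
  have hCpos : (0:ℝ) < C := by rw [hC]; positivity
  clear_value c C
  refine ⟨c, hcpos, C, hCpos, max 3 (⌈1/δ⌉₊ + 1), ?_⟩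
  intro Q hQ
  have hQ3 : 3 ≤ Q := le_trans (le_max_left _ _) hQ
  have hQ0 : 0 < Q := by omega
  have hQR : (3:ℝ) ≤ (Q:ℝ) := by exact_mod_cast hQ3
  have hQpos : (0:ℝ) < Q := by linarith
  have hlogQ : (1:ℝ) ≤ Real.log Q :=
    le_trans log_three_gt_one.le (Real.log_le_log (by norm_num) hQR)
  have hrpowQ : (1:ℝ) ≤ Real.log Q ^ β :=
    Real.one_le_rpow hlogQ (by linarith)
  have hrpowQpos : (0:ℝ) < Real.log Q ^ β := by linarith
  have h1Qδ : 1/(Q:ℝ) < δ := by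
    have h1 : ⌈1/δ⌉₊ + 1 ≤ Q := le_trans (le_max_right _ _) hQ
    have h2 : 1/δ ≤ (⌈1/δ⌉₊ : ℝ) := Nat.le_ceil _
    have h3 : ((⌈1/δ⌉₊ : ℕ):ℝ) + 1 ≤ (Q:ℝ) := by exact_mod_cast h1
    rw [div_lt_iff₀ hQpos]
    rw [div_le_iff₀ hδpos] at h2
    nlinarith
  -- Dirichlet for Q
  obtain ⟨j, k, hk0, hkQ, hjk⟩ := Real.exists_int_int_abs_mul_sub_le ξ hQ0
  -- minimiser over [1, Q]
  have hTne : (Finset.Icc (1:ℤ) (Q:ℤ)).Nonempty :=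
    ⟨1, Finset.mem_Icc.mpr ⟨le_rfl, by exact_mod_cast hQ0⟩⟩
  obtain ⟨a, haT, hamin⟩ := Finset.exists_min_image _ g hTne
  obtain ⟨ha1, haQ⟩ := Finset.mem_Icc.mp haT
  have hvstar : g a ≤ 1/((Q:ℝ)+1) := by
    refine le_trans ?_ hjk
    refine le_trans (hamin k (Finset.mem_Icc.mpr ⟨hk0, hkQ⟩)) ?_
    exact hgle k j
  have hvlt : g a < 1/(Q:ℝ) := by
    apply lt_of_le_of_lt hvstar
    rw [div_lt_div_iff₀ (by linarith) hQpos]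
    linarith
  -- a is at least q₁
  have haq₁ : (q₁:ℤ) ≤ a := by
    by_contra hcon
    push_neg at hcon
    have h₁ := hδle a ha1 (by omega)
    linarith [hvlt, h1Qδ]
  have haR : ((q₁:ℤ):ℝ) ≤ (a:ℝ) := by exact_mod_cast haq₁
  have ha3 : (3:ℝ) ≤ (a:ℝ) := by
    have h31 : (3:ℤ) ≤ (q₁:ℤ) := by exact_mod_cast hq₁3
    have : (3:ℤ) ≤ a := le_trans h31 haq₁
    exact_mod_cast this
  have haQR : (a:ℝ) ≤ (Q:ℝ) := by exact_mod_cast haQ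
  have hloga : (1:ℝ) ≤ Real.log a :=
    le_trans log_three_gt_one.le (Real.log_le_log (by norm_num) ha3)
  have hlogaQ : Real.log a ≤ Real.log Q := Real.log_le_log (by linarith) haQR
  -- lower bound from H for a
  have hHa : (((a:ℝ)) * Real.log a ^ β')⁻¹ ≤ g a := by
    have hna : a.toNat = a := Int.toNat_of_nonneg (by omega)
    have hq₀a : q₀ ≤ a.toNat := by
      have : (q₀:ℤ) ≤ a := le_trans (by exact_mod_cast le_max_left q₀ 3) haq₁
      omega
    have := H a.toNat hq₀a (round ((a:ℝ)*ξ))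
    have hcast : ((a.toNat:ℕ):ℝ) = (a:ℝ) := by exact_mod_cast congrArg Int.cast hna
    rw [hcast] at this
    exact this
  -- key inequality: Q + 1 ≤ a * log Q ^ β
  have hrpow_mono : Real.log a ^ β' ≤ Real.log Q ^ β := by
    calc Real.log a ^ β' ≤ Real.log Q ^ β' :=
          Real.rpow_le_rpow (by linarith) hlogaQ (by linarith)
    _ ≤ Real.log Q ^ β := Real.rpow_le_rpow_of_exponent_le hlogQ hβ'β
  have hrpowa_pos : (0:ℝ) < Real.log a ^ β' := Real.rpow_pos_of_pos (by linarith) _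
  have hkey : (Q:ℝ) + 1 ≤ (a:ℝ) * Real.log Q ^ β := by
    have h1 : (((a:ℝ)) * Real.log a ^ β')⁻¹ ≤ 1/((Q:ℝ)+1) := le_trans hHa hvstar
    have h2 : (Q:ℝ)+1 ≤ (a:ℝ) * Real.log a ^ β' := by
      rw [inv_le_comm₀ (by positivity) (by positivity)] at h1
      rw [one_div, inv_inv] at h1
      linarith [h1]
    calc (Q:ℝ)+1 ≤ (a:ℝ) * Real.log a ^ β' := h2
    _ ≤ (a:ℝ) * Real.log Q ^ β := mul_le_mul_of_nonneg_left hrpow_mono (by linarith)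
  -- generic lower bound (Q log Q^β)⁻¹ ≤ (x log x^β')⁻¹ for 3 ≤ x ≤ Q
  have lower_gen : ∀ x : ℝ, 3 ≤ x → x ≤ Q →
      ((Q:ℝ) * Real.log Q ^ β)⁻¹ ≤ (x * Real.log x ^ β')⁻¹ := by
    intro x h3 hxQ
    have hlogx : (1:ℝ) ≤ Real.log x :=
      le_trans log_three_gt_one.le (Real.log_le_log (by norm_num) h3)
    apply inv_anti₀ (by positivity)
    have hstep : Real.log x ^ β' ≤ Real.log Q ^ β := by
      calc Real.log x ^ β' ≤ Real.log Q ^ β' :=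
            Real.rpow_le_rpow (by linarith) (Real.log_le_log (by linarith) hxQ) (by linarith)
      _ ≤ Real.log Q ^ β := Real.rpow_le_rpow_of_exponent_le hlogQ hβ'β
    calc x * Real.log x ^ β' ≤ (Q:ℝ) * Real.log x ^ β' :=
          mul_le_mul_of_nonneg_right hxQ (Real.rpow_pos_of_pos (by linarith) _).le
    _ ≤ (Q:ℝ) * Real.log Q ^ β := mul_le_mul_of_nonneg_left hstep (by linarith)
  have hlower_form : c * (Q : ℝ)⁻¹ * Real.log Q ^ (-β) = ((Q:ℝ) * Real.log Q ^ β)⁻¹ := by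
    rw [hc, Real.rpow_neg (by linarith), mul_inv]
    ring
  -- Dirichlet for a - 1
  have hN : 0 < (a-1).toNat := by omega
  obtain ⟨j', k', hk0', hkN', hjk'⟩ := Real.exists_int_int_abs_mul_sub_le ξ hN
  set b := k' with hb
  have hbA : b ≤ a - 1 := by
    have : ((a-1).toNat : ℤ) = a - 1 := Int.toNat_of_nonneg (by omega)
    omega
  have hb1 : 1 ≤ b := hk0'
  have hbQ : b ∈ Finset.Icc (1:ℤ) (Q:ℤ) := Finset.mem_Icc.mpr ⟨hb1, by omega⟩
  have hbR : (b:ℝ) < (a:ℝ) := by exact_mod_cast (by omega : b < a)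
  have hb0R : (1:ℝ) ≤ (b:ℝ) := by exact_mod_cast hb1
  have hNcast : (((a-1).toNat:ℤ):ℝ) = (a:ℝ) - 1 := by
    rw [Int.toNat_of_nonneg (by omega)]; push_cast; ring
  have hvb : g b ≤ 1/(a:ℝ) := by
    refine le_trans (hgle b j') (le_trans hjk' ?_)
    have : (((a-1).toNat:ℕ):ℝ) + 1 = (a:ℝ) := by
      have := hNcast
      push_cast at this ⊢
      linarith
    rw [this]
  have hvab : g a ≤ g b := hamin b hbQ
  have hgapos : 0 < g a := hgpos a (by omega)
  -- the two vectors
  refine ⟨(a, round ((a:ℝ)*ξ)), (b, round ((b:ℝ)*ξ)), ?_, ⟨?_, ?_, ?_⟩, ⟨?_, ?_, ?_⟩⟩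
  · -- determinant nonzero
    intro hdet
    dsimp only at hdet
    have hcast : (a:ℝ) * ((b:ℝ)*ξ - round ((b:ℝ)*ξ)) - (b:ℝ) * ((a:ℝ)*ξ - round ((a:ℝ)*ξ))
        = -((a * round ((b:ℝ)*ξ) - round ((a:ℝ)*ξ) * b : ℤ) : ℝ) := by
      push_cast
      ring
    rw [hdet] at hcast
    push_cast at hcast
    have heq : (a:ℝ) * ((b:ℝ)*ξ - round ((b:ℝ)*ξ)) = (b:ℝ) * ((a:ℝ)*ξ - round ((a:ℝ)*ξ)) := by
      linarith
    have habs : (a:ℝ) * g b = (b:ℝ) * g a := by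
      have h' := congrArg abs heq
      rw [abs_mul, abs_mul, abs_of_pos (show (0:ℝ) < (a:ℝ) by linarith),
        abs_of_pos (show (0:ℝ) < (b:ℝ) by linarith)] at h'
      exact h'
    have hlt : (b:ℝ) * g a < (a:ℝ) * g a := mul_lt_mul_of_pos_right hbR hgapos
    rw [← habs] at hlt
    have : g b < g a := lt_of_mul_lt_mul_left hlt (by linarith)
    linarith
  · -- height of first vector
    dsimp only
    rw [max_le_iff]
    constructor
    · rw [abs_of_pos (show (0:ℝ) < (a:ℝ) by linarith)]
      calc (a:ℝ) ≤ (Q:ℝ) := haQR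
      _ ≤ C * Q := le_mul_of_one_le_left hQpos.le hC1
    · have h1 : |(round ((a:ℝ)*ξ) : ℝ)| ≤ |(a:ℝ)*ξ| + 1/2 := by
        have := abs_sub_round ((a:ℝ)*ξ)
        calc |(round ((a:ℝ)*ξ) : ℝ)| = |(a:ℝ)*ξ - ((a:ℝ)*ξ - round ((a:ℝ)*ξ))| := by ring_nf
        _ ≤ |(a:ℝ)*ξ| + |(a:ℝ)*ξ - round ((a:ℝ)*ξ)| := abs_sub _ _
        _ ≤ |(a:ℝ)*ξ| + 1/2 := by linarith
      calc |(round ((a:ℝ)*ξ) : ℝ)| ≤ |(a:ℝ)*ξ| + 1/2 := h1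
      _ = |(a:ℝ)| * |ξ| + 1/2 := by rw [abs_mul]
      _ ≤ (Q:ℝ) * |ξ| + 1/2 := by
          gcongr
          rw [abs_of_pos (show (0:ℝ) < (a:ℝ) by linarith)]; exact haQR
      _ ≤ (|ξ| + 1) * Q := by nlinarith [abs_nonneg ξ]
      _ = C * Q := by rw [hC]
  · -- lower bound first vector
    dsimp only
    rw [hlower_form]
    exact le_trans (lower_gen (a:ℝ) ha3 haQR) hHa
  · -- upper bound first vector
    dsimp only
    calc |(a:ℝ)*ξ - round ((a:ℝ)*ξ)| = g a := rfl
    _ ≤ 1/((Q:ℝ)+1) := hvstar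
    _ ≤ 1/(Q:ℝ) := by
        apply div_le_div_of_nonneg_left (by norm_num) hQpos (by linarith)
    _ ≤ C * (Q : ℝ)⁻¹ * Real.log Q ^ β := by
        rw [one_div]
        calc (Q:ℝ)⁻¹ = 1 * (Q:ℝ)⁻¹ * 1 := by ring
        _ ≤ C * (Q : ℝ)⁻¹ * Real.log Q ^ β := by gcongr <;> positivity
  · -- height second vector
    dsimp only
    rw [max_le_iff]
    constructor
    · rw [abs_of_pos (show (0:ℝ) < (b:ℝ) by linarith)]
      calc (b:ℝ) ≤ (Q:ℝ) := by
            have : (b:ℤ) ≤ (Q:ℤ) := (Finset.mem_Icc.mp hbQ).2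
            exact_mod_cast this
      _ ≤ C * Q := le_mul_of_one_le_left hQpos.le hC1
    · have h1 : |(round ((b:ℝ)*ξ) : ℝ)| ≤ |(b:ℝ)*ξ| + 1/2 := by
        have := abs_sub_round ((b:ℝ)*ξ)
        calc |(round ((b:ℝ)*ξ) : ℝ)| = |(b:ℝ)*ξ - ((b:ℝ)*ξ - round ((b:ℝ)*ξ))| := by ring_nf
        _ ≤ |(b:ℝ)*ξ| + |(b:ℝ)*ξ - round ((b:ℝ)*ξ)| := abs_sub _ _
        _ ≤ |(b:ℝ)*ξ| + 1/2 := by linarith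
      have hbQR : (b:ℝ) ≤ (Q:ℝ) := by
        have : (b:ℤ) ≤ (Q:ℤ) := (Finset.mem_Icc.mp hbQ).2
        exact_mod_cast this
      calc |(round ((b:ℝ)*ξ) : ℝ)| ≤ |(b:ℝ)*ξ| + 1/2 := h1
      _ = |(b:ℝ)| * |ξ| + 1/2 := by rw [abs_mul]
      _ ≤ (Q:ℝ) * |ξ| + 1/2 := by
          gcongr
          rw [abs_of_pos (show (0:ℝ) < (b:ℝ) by linarith)]; exact hbQR
      _ ≤ (|ξ| + 1) * Q := by nlinarith [abs_nonneg ξ]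
      _ = C * Q := by rw [hC]
  · -- lower bound second vector
    dsimp only
    rw [hlower_form]
    rcases lt_or_ge b (q₁:ℤ) with hsmall | hbig
    · -- b small : use δ
      have hδb : δ ≤ g b := hδle b hb1 (by omega)
      calc ((Q:ℝ) * Real.log Q ^ β)⁻¹ ≤ ((Q:ℝ) * 1)⁻¹ := by
            apply inv_anti₀ (by positivity)
            gcongr
      _ = 1/(Q:ℝ) := by rw [mul_one, one_div]
      _ ≤ δ := h1Qδ.le
      _ ≤ g b := hδb
    · -- b large : use H
      have hb3 : (3:ℝ) ≤ (b:ℝ) := by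
        have : (3:ℤ) ≤ (q₁:ℤ) := by exact_mod_cast hq₁3
        have : (3:ℤ) ≤ b := le_trans this hbig
        exact_mod_cast this
      have hbQR : (b:ℝ) ≤ (Q:ℝ) := by
        have : (b:ℤ) ≤ (Q:ℤ) := (Finset.mem_Icc.mp hbQ).2
        exact_mod_cast this
      have hHb : (((b:ℝ)) * Real.log b ^ β')⁻¹ ≤ g b := by
        have hnb : (b.toNat : ℤ) = b := Int.toNat_of_nonneg (by omega)
        have hq₀b : q₀ ≤ b.toNat := by
          have : (q₀:ℤ) ≤ (q₁:ℤ) := by exact_mod_cast le_max_left q₀ 3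
          omega
        have := H b.toNat hq₀b (round ((b:ℝ)*ξ))
        have hcast : ((b.toNat:ℕ):ℝ) = (b:ℝ) := by exact_mod_cast congrArg Int.cast hnb
        rw [hcast] at this
        exact this
      exact le_trans (lower_gen (b:ℝ) hb3 hbQR) hHb
  · -- upper bound second vector
    dsimp only
    calc |(b:ℝ)*ξ - round ((b:ℝ)*ξ)| = g b := rfl
    _ ≤ 1/(a:ℝ) := hvb
    _ ≤ Real.log Q ^ β / ((Q:ℝ)+1) := by
        rw [div_le_div_iff₀ (by linarith) (by linarith)]
        linarith [hkey]
    _ ≤ C * (Q : ℝ)⁻¹ * Real.log Q ^ β := by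
        have h2 : (0:ℝ) < (Q:ℝ)+1 := by linarith
        rw [div_le_iff₀ h2]
        have hQQ : (Q:ℝ)⁻¹ * (Q:ℝ) = 1 := inv_mul_cancel₀ (ne_of_gt hQpos)
        have hinv0 : (0:ℝ) ≤ (Q:ℝ)⁻¹ := inv_nonneg.mpr hQpos.le
        have expand : C * (Q:ℝ)⁻¹ * Real.log Q ^ β * ((Q:ℝ)+1)
            = C * Real.log Q ^ β * ((Q:ℝ)⁻¹*(Q:ℝ)) + C * Real.log Q ^ β * (Q:ℝ)⁻¹ := by
          ring
        rw [expand, hQQ, mul_one]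
        have t1 : Real.log Q ^ β ≤ C * Real.log Q ^ β :=
          le_mul_of_one_le_left hrpowQpos.le hC1
        have t2 : (0:ℝ) ≤ C * Real.log Q ^ β * (Q:ℝ)⁻¹ := by positivity
        linarith


lemma ae_lower (β : ℝ) (hβ : 1 < β) :
    ∀ᵐ ξ ∂(volume : Measure ℝ), ∀ᶠ q : ℕ in atTop, ∀ p : ℤ,
      ((q:ℝ) * Real.log q ^ β)⁻¹ ≤ |(q:ℝ) * ξ - p| := by
  have h := MeasureTheory.ae_all_iff.mpr (fun m : ℤ => ae_lower_interval β hβ m)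
  filter_upwards [h] with ξ hξ
  have hmem : ξ ∈ Set.Ico ((⌊ξ⌋ : ℤ):ℝ) ((⌊ξ⌋:ℤ) + 1) :=
    ⟨Int.floor_le ξ, Int.lt_floor_add_one ξ⟩
  filter_upwards [hξ ⌊ξ⌋] with q hq
  exact fun p => hq p hmem

lemma ae_irrational : ∀ᵐ ξ ∂(volume : Measure ℝ), Irrational ξ := by
  have : {x : ℝ | ¬ Irrational x} = Set.range ((↑) : ℚ → ℝ) := by
    ext x
    simp [Irrational]
  rw [MeasureTheory.ae_iff, this]
  exact (Set.countable_range _).measure_zero _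

theorem stmt7 :
    ∀ᵐ ξ ∂(volume : Measure ℝ), ∀ β : ℝ, 1 < β →
      ∃ c > (0:ℝ), ∃ C > (0:ℝ), ∃ Q₀ : ℕ, ∀ Q : ℕ, Q₀ ≤ Q →
        ∃ q q' : ℤ × ℤ,
          (q.1 * q'.2 - q.2 * q'.1 ≠ 0) ∧
          (max |(q.1 : ℝ)| |(q.2 : ℝ)| ≤ C * Q ∧
            c * (Q : ℝ)⁻¹ * Real.log Q ^ (-β) ≤ |(q.1 : ℝ) * ξ - (q.2 : ℝ)| ∧
            |(q.1 : ℝ) * ξ - (q.2 : ℝ)| ≤ C * (Q : ℝ)⁻¹ * Real.log Q ^ β) ∧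
          (max |(q'.1 : ℝ)| |(q'.2 : ℝ)| ≤ C * Q ∧
            c * (Q : ℝ)⁻¹ * Real.log Q ^ (-β) ≤ |(q'.1 : ℝ) * ξ - (q'.2 : ℝ)| ∧
            |(q'.1 : ℝ) * ξ - (q'.2 : ℝ)| ≤ C * (Q : ℝ)⁻¹ * Real.log Q ^ β) := by
  have hβk : ∀ k : ℕ, (1:ℝ) < 1 + (1:ℝ)/((k:ℝ)+1) := by
    intro k
    have : (0:ℝ) < (1:ℝ)/((k:ℝ)+1) := by positivity
    linarith
  have h2 := MeasureTheory.ae_all_iff.mpr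
    (fun k : ℕ => ae_lower (1 + (1:ℝ)/((k:ℝ)+1)) (hβk k))
  filter_upwards [ae_irrational, h2] with ξ hirr hξ
  intro β hβ
  obtain ⟨k, hk⟩ := exists_nat_one_div_lt (show (0:ℝ) < β - 1 by linarith)
  set β' : ℝ := 1 + (1:ℝ)/((k:ℝ)+1) with hβ'
  have hβ'1 : 1 < β' := hβk k
  have hβ'β : β' ≤ β := by
    rw [hβ']
    push_cast at hk ⊢
    linarith
  obtain ⟨q₀, hq₀⟩ := Filter.eventually_atTop.mp (hξ k)
  exact main_det ξ hirr β β' hβ'1 hβ'β q₀ hq₀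
end

section
/- For almost every ξ ∈ ℝ^m (with respect to Lebesgue measure, m ≥ 2) and every ε > 0, for all sufficiently large integers Q there exists a nonzero integer vector q ∈ ℤ^m with ‖q‖ ≤ Q and Q^{−(m−1)−ε} ≤ |q · ξ| ≤ Q^{−(m−1)+ε}. Consequently, the Diophantine exponent of ξ (the supremum of τ > 0 such that for all sufficiently large Q there exists a nonzero q ∈ ℤ^m with ‖q‖ ≤ Q and |q·ξ| = Q^{−τ+o(1)}) equals m − 1 for almost all ξ ∈ ℝ^m. -/
open MeasureTheory Filter

lemma supZ_nonneg {k : ℕ} (q : Fin k → ℤ) : 0 ≤ supZ q := norm_nonneg _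

lemma abs_le_supZ {k : ℕ} (q : Fin k → ℤ) (i : Fin k) : |(q i : ℝ)| ≤ supZ q := by
  simpa [supZ, Real.norm_eq_abs] using norm_le_pi_norm (fun i => (q i : ℝ)) i

lemma supZ_le_iff {k : ℕ} {q : Fin k → ℤ} {r : ℝ} (hr : 0 ≤ r) :
    supZ q ≤ r ↔ ∀ i, |(q i : ℝ)| ≤ r := by
  simpa [supZ, Real.norm_eq_abs] using pi_norm_le_iff_of_nonneg (x := fun i => (q i : ℝ)) hr

lemma one_le_supZ {k : ℕ} {q : Fin k → ℤ} (hq : q ≠ 0) : 1 ≤ supZ q := by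
  obtain ⟨i, hi⟩ : ∃ i, q i ≠ 0 := by
    by_contra h; push_neg at h; exact hq (funext h)
  refine le_trans ?_ (abs_le_supZ q i)
  have : (1 : ℤ) ≤ |q i| := Int.one_le_abs (by omega)
  calc (1:ℝ) ≤ ((|q i| : ℤ) : ℝ) := by exact_mod_cast this
  _ = |(q i : ℝ)| := by push_cast; ring

lemma supZ_pos {k : ℕ} {q : Fin k → ℤ} (hq : q ≠ 0) : 0 < supZ q :=
  lt_of_lt_of_le one_pos (one_le_supZ hq)

lemma exists_supZ_eq {k : ℕ} [NeZero k] (q : Fin k → ℤ) :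
    ∃ j, supZ q = |(q j : ℝ)| := by
  obtain ⟨j, -, hj⟩ := Finset.exists_max_image Finset.univ (fun i => |(q i : ℝ)|)
    ⟨⟨0, Nat.pos_of_ne_zero (NeZero.ne k)⟩, Finset.mem_univ _⟩
  exact ⟨j, le_antisymm ((supZ_le_iff (abs_nonneg _)).2 fun i => hj i (Finset.mem_univ _))
    (abs_le_supZ q j)⟩

lemma slab_measure (m : ℕ) (q : Fin m → ℤ) (j : Fin m) (hj : q j ≠ 0) (δ N : ℝ) (hδ : 0 ≤ δ) (hN : 0 ≤ N) :
    volume {ξ : Fin m → ℝ | |∑ i, (q i : ℝ) * ξ i| ≤ δ ∧ ∀ i, |ξ i| ≤ N}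
      ≤ ENNReal.ofReal (|(q j : ℝ)|⁻¹ * (2*δ)) * ENNReal.ofReal (2*N) ^ (m - 1) := by
  classical
  set M : Matrix (Fin m) (Fin m) ℝ :=
    1 + Matrix.replicateCol (Fin 1) (Pi.single j (1:ℝ)) *
      Matrix.replicateRow (Fin 1) (fun k => (q k : ℝ) - (Pi.single j (1:ℝ) : Fin m → ℝ) k) with hM
  have hdet : M.det = (q j : ℝ) := by
    rw [hM]
    refine (Matrix.det_one_add_replicateCol_mul_replicateRow (ι := Fin 1) _ _).trans ?_
    simp [dotProduct, Pi.single_apply]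
  have hdet' : LinearMap.det (Matrix.toLin' M) = (q j : ℝ) := by
    rw [LinearMap.det_toLin']; exact hdet
  have hqj : ((q j : ℝ)) ≠ 0 := by exact_mod_cast hj
  set T : Set (Fin m → ℝ) :=
    Set.univ.pi (fun i => if i = j then Set.Icc (-δ) δ else Set.Icc (-N) N) with hT
  have hMentry : ∀ i k, M i k = if i = j then (q k : ℝ) else if i = k then 1 else 0 := by
    intro i k
    rw [hM]
    simp only [Matrix.add_apply, Matrix.one_apply, Matrix.mul_apply, Matrix.replicateCol_apply,
      Matrix.replicateRow_apply, Fin.sum_univ_one, Pi.single_apply]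
    by_cases hij : i = j
    · subst hij
      by_cases hik : i = k
      · subst hik; simp
      · have hki : ¬ k = i := fun h => hik h.symm
        simp [hik, hki]
    · simp [hij]
  have happ : ∀ ξ : Fin m → ℝ, ∀ i, Matrix.toLin' M ξ i
      = if i = j then ∑ k, (q k : ℝ) * ξ k else ξ i := by
    intro ξ i
    rw [Matrix.toLin'_apply]
    simp only [Matrix.mulVec, dotProduct]
    rw [Finset.sum_congr rfl (fun k _ => by rw [hMentry i k])]
    by_cases hij : i = j
    · simp [hij]
    · simp [hij, ite_mul, Finset.sum_ite_eq]
  have hsub : {ξ : Fin m → ℝ | |∑ i, (q i : ℝ) * ξ i| ≤ δ ∧ ∀ i, |ξ i| ≤ N}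
      ⊆ (Matrix.toLin' M) ⁻¹' T := by
    intro ξ ⟨h1, h2⟩
    rw [Set.mem_preimage, hT, Set.mem_pi]
    intro i _
    rw [happ]
    by_cases hij : i = j
    · simp only [hij, if_true]; exact abs_le.1 h1
    · simp only [hij, if_false]; exact abs_le.1 (h2 i)
  refine le_trans (measure_mono hsub) ?_
  rw [Measure.addHaar_preimage_linearMap volume (by rw [hdet']; exact hqj)]
  rw [hdet']
  have hTvol : volume T = ENNReal.ofReal (2*δ) * ENNReal.ofReal (2*N) ^ (m - 1) := by
    rw [hT, volume_pi_pi]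
    rw [← Finset.mul_prod_erase Finset.univ _ (Finset.mem_univ j)]
    rw [if_pos rfl, Real.volume_Icc]
    have : ∀ i ∈ Finset.univ.erase j,
        volume (if i = j then Set.Icc (-δ) δ else Set.Icc (-N) N)
          = ENNReal.ofReal (2*N) := by
      intro i hi
      rw [if_neg (Finset.ne_of_mem_erase hi), Real.volume_Icc]
      congr 1; ring
    rw [Finset.prod_congr rfl this, Finset.prod_const, Finset.card_erase_of_mem (Finset.mem_univ j),
      Finset.card_univ, Fintype.card_fin]
    congr 2; ring
  rw [hTvol, abs_inv, ENNReal.ofReal_mul (p := |(q j : ℝ)|⁻¹) (by positivity), mul_assoc]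

lemma int_rpow_summable {s : ℝ} (hs : 1 < s) :
    Summable (fun t : ℤ => ((1:ℝ) + |(t:ℝ)|) ^ (-s)) := by
  have base : Summable (fun n : ℕ => ((n:ℝ)) ^ (-s)) :=
    Real.summable_nat_rpow.2 (by linarith)
  apply Summable.of_nat_of_neg_add_one
  · have h1 := (summable_nat_add_iff (f := fun n : ℕ => ((n:ℝ)) ^ (-s)) 1).2 base
    refine h1.congr fun n => ?_
    congr 1
    push_cast
    rw [abs_of_nonneg (by positivity)]
    ring
  · have h2 := (summable_nat_add_iff (f := fun n : ℕ => ((n:ℝ)) ^ (-s)) 2).2 base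
    refine h2.congr fun n => ?_
    congr 1
    push_cast
    rw [abs_neg, abs_of_nonneg (by positivity)]
    ring

lemma tsum_pi_prod (k : ℕ) (g : ℤ → ENNReal) :
    ∑' q : Fin k → ℤ, ∏ i, g (q i) = (∑' t : ℤ, g t) ^ k := by
  induction k with
  | zero =>
      rw [tsum_eq_single (0 : Fin 0 → ℤ) (fun b hb => absurd (Subsingleton.elim b 0) hb)]
      simp
  | succ n ih =>
      rw [← (Fin.consEquiv (fun _ : Fin (n+1) => ℤ)).tsum_eq (fun q => ∏ i, g (q i))]
      have : ∀ p : ℤ × (Fin n → ℤ),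
          (∏ i, g ((Fin.consEquiv (fun _ : Fin (n+1) => ℤ)) p i)) = g p.1 * ∏ i, g (p.2 i) := by
        intro p
        rw [Fin.prod_univ_succ]
        congr 1
      rw [tsum_congr this, ENNReal.tsum_prod']
      simp_rw [ENNReal.tsum_mul_left]
      rw [ENNReal.tsum_mul_right, ih, pow_succ, mul_comm]

lemma supZ_bound (m : ℕ) (q : Fin m → ℤ) (hq : q ≠ 0) (p : ℝ) (hp : 0 ≤ p) :
    supZ q ^ (-((m:ℝ) * p)) ≤ (2:ℝ) ^ ((m:ℝ)*p) * ∏ i, ((1:ℝ) + |(q i : ℝ)|) ^ (-p) := by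
  have hA1 : 1 ≤ supZ q := one_le_supZ hq
  have hA0 : 0 < supZ q := supZ_pos hq
  have step1 : ∏ i, ((1:ℝ) + |(q i : ℝ)|) ≤ (2 * supZ q) ^ (m:ℕ) := by
    calc ∏ i, ((1:ℝ) + |(q i : ℝ)|) ≤ ∏ _i : Fin m, (2 * supZ q) := by
          apply Finset.prod_le_prod
          · intro i _; positivity
          · intro i _
            have := abs_le_supZ q i
            linarith
      _ = (2 * supZ q) ^ (m:ℕ) := by rw [Finset.prod_const, Finset.card_univ, Fintype.card_fin]
  have step2 : (∏ i, ((1:ℝ) + |(q i : ℝ)|)) ^ p ≤ (2 * supZ q) ^ ((m:ℝ) * p) := by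
    have h1 : (∏ i, ((1:ℝ) + |(q i : ℝ)|)) ^ p ≤ ((2 * supZ q) ^ (m:ℕ)) ^ p :=
      Real.rpow_le_rpow (Finset.prod_nonneg fun i _ => by positivity) step1 hp
    calc (∏ i, ((1:ℝ) + |(q i : ℝ)|)) ^ p ≤ ((2 * supZ q) ^ (m:ℕ)) ^ p := h1
      _ = (2 * supZ q) ^ ((m:ℝ) * p) := by
          rw [← Real.rpow_natCast (2 * supZ q) m, ← Real.rpow_mul (by positivity)]
  have prod_rpow : ∏ i, ((1:ℝ) + |(q i : ℝ)|) ^ (-p)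
      = ((∏ i, ((1:ℝ) + |(q i : ℝ)|)) ^ p)⁻¹ := by
    rw [Real.finset_prod_rpow _ _ (fun i _ => by positivity)]
    rw [← Real.rpow_neg (Finset.prod_nonneg fun i _ => by positivity)]
  rw [prod_rpow]
  have key : ((2 * supZ q) ^ ((m:ℝ)*p))⁻¹ ≤ ((∏ i, ((1:ℝ) + |(q i : ℝ)|)) ^ p)⁻¹ :=
    inv_anti₀ (by positivity) step2
  have expand : supZ q ^ (-((m:ℝ)*p)) = 2 ^ ((m:ℝ)*p) * ((2 * supZ q) ^ ((m:ℝ)*p))⁻¹ := by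
    rw [Real.rpow_neg hA0.le, Real.mul_rpow (by norm_num) hA0.le, mul_inv, ← mul_assoc,
      mul_inv_cancel₀ (by positivity), one_mul]
  rw [expand]
  exact mul_le_mul_of_nonneg_left key (by positivity)

lemma bc_box (m : ℕ) (hm : 2 ≤ m) {ε : ℝ} (hε : 0 < ε) (N : ℕ) :
    ∀ᵐ ξ ∂(volume : Measure (Fin m → ℝ)), (∀ i, |ξ i| ≤ (N:ℝ)) →
      {q : Fin m → ℤ | q ≠ 0 ∧ |∑ i, (q i : ℝ) * ξ i| ≤ supZ q ^ (-((m:ℝ)-1) - ε)}.Finite := by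
  classical
  haveI : NeZero m := ⟨by omega⟩
  haveI : Infinite (Fin m → ℤ) := Infinite.of_injective (fun t : ℤ => fun _ => t)
      (fun a b h => by simpa using congrFun h ⟨0, by omega⟩)
  haveI : Denumerable (Fin m → ℤ) := Denumerable.ofEncodableOfInfinite _
  set e : ℕ ≃ (Fin m → ℤ) := (Denumerable.eqv (Fin m → ℤ)).symm with he
  set sq : (Fin m → ℤ) → Set (Fin m → ℝ) := fun q =>
    if q = 0 then ∅ else
      {ξ | |∑ i, (q i : ℝ) * ξ i| ≤ supZ q ^ (-((m:ℝ)-1) - ε) ∧ ∀ i, |ξ i| ≤ (N:ℝ)} with hsq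
  set p : ℝ := ((m:ℝ) + ε) / m with hp
  have hm0 : (0:ℝ) < m := by
    have : 0 < m := by omega
    exact_mod_cast this
  have hp1 : 1 < p := by rw [hp, lt_div_iff₀ hm0]; linarith
  have hmp : (m:ℝ) * p = m + ε := by rw [hp]; field_simp
  set C : ENNReal := ENNReal.ofReal ((2:ℝ) * 2 ^ ((m:ℝ)*p)) *
      ENNReal.ofReal (2*(N:ℝ)) ^ (m-1) with hC
  have hbound : ∀ q : Fin m → ℤ,
      volume (sq q) ≤ C * ∏ i, ENNReal.ofReal (((1:ℝ) + |(q i : ℝ)|) ^ (-p)) := by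
    intro q
    by_cases hq : q = 0
    · simp [hsq, hq]
    · obtain ⟨j, hj⟩ := exists_supZ_eq q
      have hqj : q j ≠ 0 := by
        intro h
        rw [h] at hj
        simp only [Int.cast_zero, abs_zero] at hj
        exact (supZ_pos hq).ne' hj
      set δ : ℝ := supZ q ^ (-((m:ℝ)-1) - ε) with hδdef
      have hδ0 : 0 ≤ δ := Real.rpow_nonneg (supZ_nonneg q) _
      have h1 : volume (sq q) ≤ ENNReal.ofReal (|(q j:ℝ)|⁻¹ * (2*δ))
          * ENNReal.ofReal (2*(N:ℝ)) ^ (m-1) := by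
        rw [hsq]
        simp only [if_neg hq]
        exact slab_measure m q j hqj δ N hδ0 (Nat.cast_nonneg N)
      have hsupinv : (supZ q)⁻¹ * supZ q ^ (-((m:ℝ)-1)-ε) = supZ q ^ (-((m:ℝ)*p)) := by
        rw [hmp, ← Real.rpow_neg_one (supZ q), ← Real.rpow_add (supZ_pos hq)]
        ring_nf
      have h2 : |(q j:ℝ)|⁻¹ * (2*δ) = 2 * supZ q ^ (-((m:ℝ)*p)) := by
        rw [← hj, hδdef, ← hsupinv]; ring
      have h4 : 2 * supZ q ^ (-((m:ℝ)*p))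
          ≤ 2 * ((2:ℝ) ^ ((m:ℝ)*p) * ∏ i, ((1:ℝ) + |(q i : ℝ)|) ^ (-p)) :=
        mul_le_mul_of_nonneg_left (supZ_bound m q hq p (by positivity)) (by norm_num)
      have h5 : volume (sq q) ≤ ENNReal.ofReal (2 * ((2:ℝ) ^ ((m:ℝ)*p)
          * ∏ i, ((1:ℝ) + |(q i : ℝ)|) ^ (-p))) * ENNReal.ofReal (2*(N:ℝ)) ^ (m-1) := by
        refine le_trans h1 (mul_le_mul_left ?_ _)
        rw [h2]
        exact ENNReal.ofReal_le_ofReal h4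
      refine le_trans h5 (le_of_eq ?_)
      rw [show (2:ℝ) * ((2:ℝ) ^ ((m:ℝ)*p) * ∏ i, ((1:ℝ) + |(q i : ℝ)|) ^ (-p))
          = ((2:ℝ) * 2 ^ ((m:ℝ)*p)) * ∏ i, ((1:ℝ) + |(q i : ℝ)|) ^ (-p) by ring]
      rw [ENNReal.ofReal_mul (by positivity),
        ENNReal.ofReal_prod_of_nonneg (fun i _ => by positivity), hC]
      ring
  have htsum : ∑' n : ℕ, volume (sq (e n)) ≠ ⊤ := by
    rw [e.tsum_eq (fun q => volume (sq q))]
    refine ne_top_of_le_ne_top ?_ (ENNReal.tsum_le_tsum (fun q => hbound q))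
    rw [ENNReal.tsum_mul_left,
      tsum_pi_prod m (fun t => ENNReal.ofReal (((1:ℝ) + |(t:ℝ)|) ^ (-p)))]
    apply ENNReal.mul_ne_top
    · rw [hC]
      exact ENNReal.mul_ne_top ENNReal.ofReal_ne_top (ENNReal.pow_ne_top ENNReal.ofReal_ne_top)
    · apply ENNReal.pow_ne_top
      rw [← ENNReal.ofReal_tsum_of_nonneg (fun t => by positivity) (int_rpow_summable hp1)]
      exact ENNReal.ofReal_ne_top
  have hae := MeasureTheory.ae_eventually_notMem htsum
  filter_upwards [hae] with ξ hξ hbox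
  rw [eventually_atTop] at hξ
  obtain ⟨n₀, hn₀⟩ := hξ
  apply Set.Finite.subset ((Set.finite_Iio n₀).image e)
  intro q hq
  refine ⟨e.symm q, ?_, by simp⟩
  by_contra hlt
  have hge : e.symm q ≥ n₀ := by
    simp only [Set.mem_Iio, not_lt] at hlt
    exact hlt
  have h6 := hn₀ _ hge
  rw [Equiv.apply_symm_apply] at h6
  exact h6 (by rw [hsq]; simp only [if_neg hq.1]; exact ⟨hq.2, hbox⟩)

lemma ae_ne (m : ℕ) :
    ∀ᵐ ξ ∂(volume : Measure (Fin m → ℝ)),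
      ∀ q : Fin m → ℤ, q ≠ 0 → ∑ i, (q i : ℝ) * ξ i ≠ 0 := by
  rw [MeasureTheory.ae_all_iff]
  intro q
  by_cases hq : q = 0
  · filter_upwards with ξ h; exact absurd hq h
  · set L : (Fin m → ℝ) →ₗ[ℝ] ℝ := ∑ i, (q i : ℝ) • LinearMap.proj i with hL
    have hLapp : ∀ ξ, L ξ = ∑ i, (q i : ℝ) * ξ i := by
      intro ξ
      rw [hL]
      simp [LinearMap.sum_apply, LinearMap.smul_apply, LinearMap.proj_apply, smul_eq_mul]
    have hLne : L ≠ 0 := by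
      obtain ⟨i0, hi0⟩ : ∃ i, q i ≠ 0 := by
        by_contra h; push_neg at h; exact hq (funext h)
      intro h
      have := congrArg (fun f => f (Pi.single i0 (1:ℝ))) h
      simp only [LinearMap.zero_apply] at this
      rw [hLapp] at this
      have : (q i0 : ℝ) = 0 := by
        rw [Finset.sum_eq_single i0] at this
        · simpa using this
        · intro b _ hb; simp [Pi.single_apply, hb]
        · intro hb; exact absurd (Finset.mem_univ i0) hb
      exact hi0 (by exact_mod_cast this)
    have hker : (LinearMap.ker L : Set (Fin m → ℝ)) = {ξ | ∑ i, (q i : ℝ) * ξ i = 0} := by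
      ext ξ
      simp [LinearMap.mem_ker, hLapp]
    have hnull : volume {ξ : Fin m → ℝ | ∑ i, (q i : ℝ) * ξ i = 0} = 0 := by
      rw [← hker]
      exact Measure.addHaar_submodule volume _ (by
        rw [Ne, LinearMap.ker_eq_top]; exact hLne)
    rw [MeasureTheory.ae_iff]
    convert hnull using 2
    ext ξ
    simp [hq]

lemma lower_of_finite (m : ℕ) (hm : 2 ≤ m) (ξ : Fin m → ℝ) {ε : ℝ} (hε : 0 < ε)
    (hfin : {q : Fin m → ℤ | q ≠ 0 ∧ |∑ i, (q i : ℝ) * ξ i| ≤ supZ q ^ (-((m:ℝ)-1) - ε)}.Finite)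
    (hne : ∀ q : Fin m → ℤ, q ≠ 0 → ∑ i, (q i : ℝ) * ξ i ≠ 0) :
    ∀ᶠ Q : ℕ in atTop, ∀ q : Fin m → ℤ, q ≠ 0 → supZ q ≤ Q →
      (Q:ℝ) ^ (-((m:ℝ)-1) - ε) ≤ |∑ i, (q i : ℝ) * ξ i| := by
  classical
  set F : Finset (Fin m → ℤ) := hfin.toFinset with hF
  obtain ⟨c, hc0, hc⟩ : ∃ c, 0 < c ∧ ∀ q ∈ F, c ≤ |∑ i, (q i : ℝ) * ξ i| := by
    rcases Finset.eq_empty_or_nonempty F with h | h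
    · refine ⟨1, one_pos, fun q hq => ?_⟩
      rw [h] at hq
      exact absurd hq (Finset.notMem_empty q)
    · obtain ⟨q0, hq0mem, hq0⟩ := Finset.exists_min_image F
        (fun q => |∑ i, (q i : ℝ) * ξ i|) h
      refine ⟨|∑ i, (q0 i : ℝ) * ξ i|, ?_, hq0⟩
      have hq0ne : q0 ≠ 0 := ((hfin.mem_toFinset).1 (hF ▸ hq0mem)).1
      exact abs_pos.2 (hne q0 hq0ne)
  have hexp : -((m:ℝ)-1) - ε = -(((m:ℝ)-1) + ε) := by ring
  have htend : Tendsto (fun Q : ℕ => (Q:ℝ) ^ (-((m:ℝ)-1) - ε)) atTop (nhds 0) := by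
    have h1 : Tendsto (fun x : ℝ => x ^ (-(((m:ℝ)-1) + ε))) atTop (nhds 0) := by
      apply tendsto_rpow_neg_atTop
      have h2 : (2:ℝ) ≤ m := by exact_mod_cast hm
      linarith
    simp_rw [hexp]
    exact h1.comp tendsto_natCast_atTop_atTop
  have hev1 : ∀ᶠ Q : ℕ in atTop, (Q:ℝ) ^ (-((m:ℝ)-1) - ε) < c :=
    htend.eventually_lt_const hc0
  filter_upwards [hev1, eventually_ge_atTop 1] with Q hQc hQ1 q hq hsup
  by_cases hbad : q ∈ F
  · exact le_trans hQc.le (hc q hbad)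
  · rw [hF, hfin.mem_toFinset] at hbad
    have hbad2 : supZ q ^ (-((m:ℝ)-1) - ε) < |∑ i, (q i : ℝ) * ξ i| := by
      by_contra hle
      push_neg at hle
      exact hbad ⟨hq, hle⟩
    refine le_trans ?_ hbad2.le
    apply Real.rpow_le_rpow_of_nonpos (supZ_pos hq) hsup
    have : (2:ℝ) ≤ m := by exact_mod_cast hm
    linarith

lemma dirichlet (n Q : ℕ) (hn : 1 ≤ n) (hQ : 1 ≤ Q) (η : Fin n → ℝ) :
    ∃ (q : Fin n → ℤ) (p : ℤ), q ≠ 0 ∧ (∀ i, |(q i : ℝ)| ≤ Q) ∧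
      |(p:ℝ)| ≤ Q * (∑ i, |η i| + 1) ∧
      |∑ i, (q i : ℝ) * η i - p| ≤ 1/(Q:ℝ)^n := by
  classical
  set T : (Fin n → Fin (Q+1)) → ℝ := fun a => ∑ i, (a i : ℝ) * η i with hT
  set K : ℕ := (Q+1)^n - 1 with hK
  have hKpos : 0 < K := by
    have h2 : 2 ≤ (Q+1)^n := by
      calc 2 = 2^1 := by norm_num
      _ ≤ 2^n := Nat.pow_le_pow_right (by norm_num) hn
      _ ≤ (Q+1)^n := Nat.pow_le_pow_left (by omega) n
    omega
  have hcard : Fintype.card (Fin K) < Fintype.card (Fin n → Fin (Q+1)) := by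
    rw [Fintype.card_fin, Fintype.card_fun, Fintype.card_fin, Fintype.card_fin, hK]
    have h2 : 2 ≤ (Q+1)^n := by
      calc 2 = 2^1 := by norm_num
      _ ≤ 2^n := Nat.pow_le_pow_right (by norm_num) hn
      _ ≤ (Q+1)^n := Nat.pow_le_pow_left (by omega) n
    omega
  set f : (Fin n → Fin (Q+1)) → Fin K := fun a =>
    ⟨(⌊Int.fract (T a) * K⌋).toNat, by
      have h0 : (0:ℤ) ≤ ⌊Int.fract (T a) * K⌋ :=
        Int.floor_nonneg.2 (mul_nonneg (Int.fract_nonneg _) (Nat.cast_nonneg K))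
      have h1 : ⌊Int.fract (T a) * K⌋ < (K:ℤ) := by
        rw [Int.floor_lt]
        push_cast
        calc Int.fract (T a) * K < 1 * K := by
              apply mul_lt_mul_of_pos_right (Int.fract_lt_one _)
              exact_mod_cast hKpos
        _ = K := one_mul _
      omega⟩ with hf
  obtain ⟨a, b, hab, hfab⟩ := Fintype.exists_ne_map_eq_of_card_lt f hcard
  have hfloor : ⌊Int.fract (T a) * K⌋ = ⌊Int.fract (T b) * K⌋ := by
    have h0a : (0:ℤ) ≤ ⌊Int.fract (T a) * K⌋ :=
      Int.floor_nonneg.2 (mul_nonneg (Int.fract_nonneg _) (Nat.cast_nonneg K))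
    have h0b : (0:ℤ) ≤ ⌊Int.fract (T b) * K⌋ :=
      Int.floor_nonneg.2 (mul_nonneg (Int.fract_nonneg _) (Nat.cast_nonneg K))
    have := congrArg Fin.val hfab
    simp only [hf] at this
    omega
  have hfrac : |Int.fract (T a) - Int.fract (T b)| < 1/(K:ℝ) := by
    have hKR : (0:ℝ) < K := by exact_mod_cast hKpos
    rw [abs_sub_lt_iff]
    constructor
    · have h1 : Int.fract (T a) * K < ⌊Int.fract (T a) * K⌋ + 1 := Int.lt_floor_add_one _
      have h2 : (⌊Int.fract (T b) * K⌋ : ℝ) ≤ Int.fract (T b) * K := Int.floor_le _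
      rw [hfloor] at h1
      rw [lt_div_iff₀ hKR]
      nlinarith
    · have h1 : Int.fract (T b) * K < ⌊Int.fract (T b) * K⌋ + 1 := Int.lt_floor_add_one _
      have h2 : (⌊Int.fract (T a) * K⌋ : ℝ) ≤ Int.fract (T a) * K := Int.floor_le _
      rw [hfloor] at h2
      rw [lt_div_iff₀ hKR]
      nlinarith
  set q : Fin n → ℤ := fun i => ((a i : ℕ) : ℤ) - ((b i : ℕ) : ℤ) with hq
  set P : ℤ := ⌊T a⌋ - ⌊T b⌋ with hP
  have hsum : ∑ i, (q i : ℝ) * η i = T a - T b := by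
    rw [hT, ← Finset.sum_sub_distrib]
    refine Finset.sum_congr rfl fun i _ => ?_
    rw [hq]
    push_cast
    ring
  have hdiff : ∑ i, (q i : ℝ) * η i - P = Int.fract (T a) - Int.fract (T b) := by
    rw [hsum, hP, Int.fract, Int.fract]
    push_cast
    ring
  have hKQ : (Q:ℕ)^n ≤ K := by
    rw [hK]
    have := Nat.pow_lt_pow_left (show Q < Q + 1 by omega) (by omega : n ≠ 0)
    omega
  have hmain : |∑ i, (q i : ℝ) * η i - P| ≤ 1/(Q:ℝ)^n := by
    rw [hdiff]
    refine le_trans hfrac.le ?_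
    apply one_div_le_one_div_of_le
    · positivity
    · exact_mod_cast hKQ
  have habs : ∀ i, |(q i : ℝ)| ≤ Q := by
    intro i
    rw [hq]
    have ha : (a i : ℕ) ≤ Q := by omega
    have hb : (b i : ℕ) ≤ Q := by omega
    rw [abs_le]
    push_cast
    constructor
    · have h1 : ((b i : ℕ):ℝ) ≤ Q := by exact_mod_cast hb
      have h2 : (0:ℝ) ≤ ((a i : ℕ):ℝ) := Nat.cast_nonneg _
      linarith
    · have h1 : ((a i : ℕ):ℝ) ≤ Q := by exact_mod_cast ha
      have h2 : (0:ℝ) ≤ ((b i : ℕ):ℝ) := Nat.cast_nonneg _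
      linarith
  refine ⟨q, P, ?_, habs, ?_, hmain⟩
  · intro h
    apply hab
    funext i
    have := congrFun h i
    simp only [hq, Pi.zero_apply] at this
    have hv : (a i : ℕ) = (b i : ℕ) := by omega
    exact Fin.ext hv
  · have h1 : |(P:ℝ)| ≤ |∑ i, (q i : ℝ) * η i| + 1 := by
      have h2 : |(P:ℝ)| ≤ |∑ i, (q i : ℝ) * η i - P| + |∑ i, (q i : ℝ) * η i| := by
        have := abs_sub_abs_le_abs_sub (∑ i, (q i : ℝ) * η i) (P:ℝ)
        have h3 := abs_sub (∑ i, (q i : ℝ) * η i) ((P:ℝ))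
        calc |(P:ℝ)| = |∑ i, (q i : ℝ) * η i - (∑ i, (q i : ℝ) * η i - P)| := by ring_nf
        _ ≤ |∑ i, (q i : ℝ) * η i| + |∑ i, (q i : ℝ) * η i - P| := abs_sub _ _
        _ = |∑ i, (q i : ℝ) * η i - P| + |∑ i, (q i : ℝ) * η i| := by ring
      have h4 : |∑ i, (q i : ℝ) * η i - P| ≤ 1 := by
        refine le_trans hmain ?_
        rw [div_le_one (by positivity)]
        exact one_le_pow₀ (by exact_mod_cast hQ)
      linarith
    have h5 : |∑ i, (q i : ℝ) * η i| ≤ Q * ∑ i, |η i| := by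
      refine le_trans (Finset.abs_sum_le_sum_abs _ _) ?_
      rw [Finset.mul_sum]
      refine Finset.sum_le_sum fun i _ => ?_
      rw [abs_mul]
      exact mul_le_mul_of_nonneg_right (habs i) (abs_nonneg (η i))
    have hQ1 : (1:ℝ) ≤ Q := by exact_mod_cast hQ
    calc |(P:ℝ)| ≤ Q * ∑ i, |η i| + 1 := by linarith
    _ ≤ Q * (∑ i, |η i| + 1) := by nlinarith [Finset.sum_nonneg (fun i (_ : i ∈ Finset.univ) => abs_nonneg (η i))]

lemma upper_exists (n : ℕ) (hn : 1 ≤ n) (ξ : Fin (n+1) → ℝ) (hξ : ξ (Fin.last n) ≠ 0)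
    {ε : ℝ} (hε : 0 < ε) :
    ∀ᶠ Q : ℕ in atTop, ∃ q : Fin (n+1) → ℤ, q ≠ 0 ∧ supZ q ≤ Q ∧
      |∑ i, (q i : ℝ) * ξ i| ≤ (Q:ℝ) ^ (-(n:ℝ) + ε) := by
  classical
  set η : Fin n → ℝ := fun i => ξ i.castSucc / ξ (Fin.last n) with hη
  set C : ℝ := ∑ i, |η i| + 1 with hC
  have hC1 : 1 ≤ C := by
    rw [hC]
    have := Finset.sum_nonneg (fun i (_ : i ∈ Finset.univ) => abs_nonneg (η i))
    linarith
  have hC0 : 0 < C := lt_of_lt_of_le one_pos hC1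
  have hev1 : ∀ᶠ Q : ℕ in atTop, 2*C ≤ (Q:ℝ) :=
    tendsto_natCast_atTop_atTop.eventually_ge_atTop (2*C)
  have hev2 : ∀ᶠ Q : ℕ in atTop, |ξ (Fin.last n)| * (2*C)^n ≤ (Q:ℝ)^ε :=
    ((tendsto_rpow_atTop hε).comp tendsto_natCast_atTop_atTop).eventually_ge_atTop _
  filter_upwards [hev1, hev2, eventually_ge_atTop 1] with Q hQ2C hQε hQ1
  have hQpos : (0:ℝ) < Q := by
    have : (1:ℝ) ≤ Q := by exact_mod_cast hQ1
    linarith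
  set Q' : ℕ := ⌊(Q:ℝ)/C⌋₊ with hQ'
  have hQCnonneg : 0 ≤ (Q:ℝ)/C := by positivity
  have hQ'le : (Q':ℝ) ≤ (Q:ℝ)/C := Nat.floor_le hQCnonneg
  have hQ'low : (Q:ℝ)/(2*C) ≤ (Q':ℝ) := by
    have h1 : (Q:ℝ)/C - 1 ≤ (Q':ℝ) := by
      have := Nat.sub_one_lt_floor ((Q:ℝ)/C)
      linarith [this.le]
    have h2 : (2:ℝ) ≤ (Q:ℝ)/C := by
      rw [le_div_iff₀ hC0]; linarith
    have hsplit : (Q:ℝ)/C - (Q:ℝ)/(2*C) = (Q:ℝ)/(2*C) := by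
      field_simp
      ring
    have hge1 : (1:ℝ) ≤ (Q:ℝ)/(2*C) := by
      rw [le_div_iff₀ (by positivity)]
      linarith
    linarith
  have hQ'1 : 1 ≤ Q' := by
    have h2 : (2:ℝ) ≤ (Q:ℝ)/C := by rw [le_div_iff₀ hC0]; linarith
    have : (1:ℝ) ≤ (Q':ℝ) := by
      have := Nat.sub_one_lt_floor ((Q:ℝ)/C)
      linarith
    exact_mod_cast this
  have hQ'pos : (0:ℝ) < (Q':ℝ) := by
    have : (1:ℝ) ≤ (Q':ℝ) := by exact_mod_cast hQ'1
    linarith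
  obtain ⟨q', p, hq'ne, hq'bound, hpbound, hmain⟩ := dirichlet n Q' hn hQ'1 η
  set q : Fin (n+1) → ℤ := Fin.snoc q' (-p) with hq
  have hsum : ∑ i, (q i : ℝ) * ξ i = ξ (Fin.last n) * (∑ i, (q' i : ℝ) * η i - p) := by
    rw [Fin.sum_univ_castSucc]
    have h1 : ∀ i : Fin n, (q i.castSucc : ℝ) * ξ i.castSucc
        = ξ (Fin.last n) * ((q' i : ℝ) * η i) := by
      intro i
      rw [hq]
      simp only [Fin.snoc_castSucc]
      rw [hη]
      field_simp
    rw [Finset.sum_congr rfl (fun i _ => h1 i)]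
    rw [hq]
    simp only [Fin.snoc_last]
    push_cast
    rw [← Finset.mul_sum]
    ring
  have habs : |∑ i, (q i : ℝ) * ξ i| ≤ |ξ (Fin.last n)| * (1/(Q':ℝ)^n) := by
    rw [hsum, abs_mul]
    exact mul_le_mul_of_nonneg_left hmain (abs_nonneg _)
  have h6 : 1/(Q':ℝ)^n ≤ (2*C)^n/(Q:ℝ)^n := by
    have hfrac : (0:ℝ) < (Q:ℝ)/(2*C) := by positivity
    have h7 : ((Q:ℝ)/(2*C))^n ≤ (Q':ℝ)^n := pow_le_pow_left₀ hfrac.le hQ'low n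
    calc 1/(Q':ℝ)^n ≤ 1/(((Q:ℝ)/(2*C))^n) :=
          one_div_le_one_div_of_le (by positivity) h7
    _ = (2*C)^n/(Q:ℝ)^n := by rw [div_pow, one_div_div]
  have hfinal : |∑ i, (q i : ℝ) * ξ i| ≤ (Q:ℝ) ^ (-(n:ℝ) + ε) := by
    have h8 : |∑ i, (q i : ℝ) * ξ i| ≤ |ξ (Fin.last n)| * ((2*C)^n/(Q:ℝ)^n) :=
      le_trans habs (mul_le_mul_of_nonneg_left h6 (abs_nonneg _))
    have h9 : |ξ (Fin.last n)| * ((2*C)^n/(Q:ℝ)^n)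
        = (|ξ (Fin.last n)| * (2*C)^n)/(Q:ℝ)^n := (mul_div_assoc _ _ _).symm
    have h10 : (|ξ (Fin.last n)| * (2*C)^n)/(Q:ℝ)^n ≤ (Q:ℝ)^ε/(Q:ℝ)^n :=
      (div_le_div_iff_of_pos_right (by positivity)).2 hQε
    have h11 : (Q:ℝ)^ε/(Q:ℝ)^n = (Q:ℝ)^(-(n:ℝ)+ε) := by
      rw [Real.rpow_add hQpos, Real.rpow_neg hQpos.le, Real.rpow_natCast]
      ring
    rw [← h11]
    rw [h9] at h8
    linarith
  have hqne : q ≠ 0 := by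
    obtain ⟨i, hi⟩ : ∃ i, q' i ≠ 0 := by
      by_contra h
      push_neg at h
      exact hq'ne (funext h)
    intro h
    have h12 := congrFun h i.castSucc
    rw [hq] at h12
    simp only [Fin.snoc_castSucc, Pi.zero_apply] at h12
    exact hi h12
  have hsup : supZ q ≤ Q := by
    rw [supZ_le_iff hQpos.le]
    intro i
    refine Fin.lastCases ?_ ?_ i
    · rw [hq]
      simp only [Fin.snoc_last]
      push_cast
      rw [abs_neg]
      have h13 : (Q':ℝ) * C ≤ Q := by
        rw [← le_div_iff₀ hC0]
        exact hQ'le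
      rw [← hC] at hpbound
      linarith [hpbound]
    · intro i'
      rw [hq]
      simp only [Fin.snoc_castSucc]
      refine le_trans (hq'bound i') ?_
      calc (Q':ℝ) ≤ (Q:ℝ)/C := hQ'le
      _ ≤ Q := div_le_self hQpos.le hC1
  exact ⟨q, hqne, hsup, hfinal⟩

lemma diag (P : ℝ → ℕ → Prop) (h : ∀ e : ℝ, 0 < e → ∀ᶠ Q : ℕ in atTop, P e Q) :
    ∃ ε : ℕ → ℝ, Tendsto ε atTop (nhds 0) ∧ ∀ᶠ Q : ℕ in atTop, P (ε Q) Q := by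
  classical
  have hN : ∀ k : ℕ, ∃ N : ℕ, ∀ Q ≥ N, P (1/((k:ℝ)+1)) Q := fun k =>
    eventually_atTop.1 (h _ (by positivity))
  choose N hNspec using hN
  set M : ℕ → ℕ := fun k => Nat.rec (N 0) (fun k ih => max (N (k+1)) (ih+1)) k with hM
  have hMN : ∀ k, N k ≤ M k := by
    intro k
    cases k with
    | zero => exact le_refl _
    | succ k => exact le_max_left _ _
  have hMstrict : StrictMono M := strictMono_nat_of_lt_succ fun k =>
    lt_of_lt_of_le (Nat.lt_succ_self _) (le_max_right _ _)
  have hMk : ∀ k, k ≤ M k := fun k => hMstrict.le_apply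
  set K : ℕ → ℕ := fun Q => Nat.findGreatest (fun k => M k ≤ Q) Q with hK
  refine ⟨fun Q => 1/((K Q : ℝ)+1), ?_, ?_⟩
  · have hKtend : Tendsto K atTop atTop := by
      rw [tendsto_atTop]
      intro b
      filter_upwards [eventually_ge_atTop (M b)] with Q hQ
      exact Nat.le_findGreatest (le_trans (hMk b) hQ) hQ
    exact tendsto_one_div_add_atTop_nhds_zero_nat.comp hKtend
  · filter_upwards [eventually_ge_atTop (M 0)] with Q hQ0
    have hMKQ : M (K Q) ≤ Q := by
      have h1 := Nat.findGreatest_spec (P := fun k => M k ≤ Q) (n := Q) (m := 0)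
        (Nat.zero_le Q) hQ0
      exact h1
    exact hNspec (K Q) Q (le_trans (hMN _) hMKQ)

theorem stmt8 (m : ℕ) (hm : 2 ≤ m) :
    ∀ᵐ ξ ∂(volume : Measure (Fin m → ℝ)),
      (∀ ε > (0:ℝ), ∀ᶠ Q : ℕ in atTop, ∃ q : Fin m → ℤ, q ≠ 0 ∧ supZ q ≤ Q ∧
        (Q : ℝ) ^ (-((m : ℝ) - 1) - ε) ≤ |∑ i, (q i : ℝ) * ξ i| ∧
        |∑ i, (q i : ℝ) * ξ i| ≤ (Q : ℝ) ^ (-((m : ℝ) - 1) + ε)) ∧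
      sSup {τ : ℝ | 0 < τ ∧ ∃ ε : ℕ → ℝ, Tendsto ε atTop (nhds 0) ∧
        ∀ᶠ Q : ℕ in atTop, ∃ q : Fin m → ℤ, q ≠ 0 ∧ supZ q ≤ Q ∧
          (Q : ℝ) ^ (-τ - ε Q) ≤ |∑ i, (q i : ℝ) * ξ i| ∧
          |∑ i, (q i : ℝ) * ξ i| ≤ (Q : ℝ) ^ (-τ + ε Q)} = (m : ℝ) - 1 := by
  obtain ⟨n, rfl⟩ : ∃ n, m = n + 1 := ⟨m - 1, by omega⟩
  have hn : 1 ≤ n := by omega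
  have hcast : ((n+1 : ℕ) : ℝ) - 1 = (n:ℝ) := by push_cast; ring
  have hnR : (0:ℝ) < n := by
    have : (1:ℝ) ≤ n := by exact_mod_cast hn
    linarith
  have hae2 : ∀ᵐ ξ ∂(volume : Measure (Fin (n+1) → ℝ)), ∀ N : ℕ, ∀ k : ℕ,
      (∀ i, |ξ i| ≤ (N:ℝ)) → {q : Fin (n+1) → ℤ | q ≠ 0 ∧
        |∑ i, (q i : ℝ) * ξ i| ≤ supZ q ^ (-(((n+1:ℕ):ℝ) - 1) - 1/((k:ℝ)+1))}.Finite := by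
    rw [MeasureTheory.ae_all_iff]
    intro N
    rw [MeasureTheory.ae_all_iff]
    intro k
    exact bc_box (n+1) (by omega) (by positivity) N
  filter_upwards [ae_ne (n+1), hae2] with ξ hne hfin
  have hlast : ξ (Fin.last n) ≠ 0 := by
    have h1 := hne (Pi.single (Fin.last n) 1) (by
      intro h
      have h2 := congrFun h (Fin.last n)
      simp at h2)
    intro h0
    apply h1
    rw [Finset.sum_eq_single (Fin.last n)]
    · simp [h0]
    · intro b _ hb
      simp [Pi.single_apply, hb]
    · intro hb
      exact absurd (Finset.mem_univ _) hb
  obtain ⟨N, hNbox⟩ : ∃ N : ℕ, ∀ i, |ξ i| ≤ (N:ℝ) := by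
    refine ⟨⌈‖ξ‖⌉₊, fun i => ?_⟩
    calc |ξ i| = ‖ξ i‖ := (Real.norm_eq_abs _).symm
    _ ≤ ‖ξ‖ := norm_le_pi_norm ξ i
    _ ≤ ⌈‖ξ‖⌉₊ := Nat.le_ceil _
  have H2 : ∀ k : ℕ, ∀ᶠ Q : ℕ in atTop, ∀ q : Fin (n+1) → ℤ, q ≠ 0 → supZ q ≤ Q →
      (Q:ℝ) ^ (-(((n+1:ℕ):ℝ) - 1) - 1/((k:ℝ)+1)) ≤ |∑ i, (q i : ℝ) * ξ i| := fun k =>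
    lower_of_finite (n+1) (by omega) ξ (by positivity) (hfin N k hNbox) hne
  simp only [hcast] at H2 ⊢
  have hA : ∀ e : ℝ, 0 < e → ∀ᶠ Q : ℕ in atTop, ∃ q : Fin (n+1) → ℤ, q ≠ 0 ∧
      supZ q ≤ (Q:ℝ) ∧ (Q:ℝ)^(-(n:ℝ) - e) ≤ |∑ i, (q i : ℝ) * ξ i| ∧
      |∑ i, (q i : ℝ) * ξ i| ≤ (Q:ℝ)^(-(n:ℝ) + e) := by
    intro e he
    obtain ⟨k, hk⟩ := exists_nat_one_div_lt he
    filter_upwards [upper_exists n hn ξ hlast he, H2 k, eventually_ge_atTop 1]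
      with Q hu h2 hQ1
    obtain ⟨q, hqne, hqsup, hqup⟩ := hu
    refine ⟨q, hqne, hqsup, ?_, hqup⟩
    refine le_trans ?_ (h2 q hqne hqsup)
    have hQR : (1:ℝ) ≤ Q := by exact_mod_cast hQ1
    apply Real.rpow_le_rpow_of_exponent_le hQR
    linarith [hk]
  constructor
  · intro e he
    exact hA e he
  · obtain ⟨εs, hεtend, hεev⟩ := diag (fun e Q => ∃ q : Fin (n+1) → ℤ, q ≠ 0 ∧
      supZ q ≤ (Q:ℝ) ∧ (Q:ℝ)^(-(n:ℝ) - e) ≤ |∑ i, (q i : ℝ) * ξ i| ∧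
      |∑ i, (q i : ℝ) * ξ i| ≤ (Q:ℝ)^(-(n:ℝ) + e)) hA
    have hmem : (n:ℝ) ∈ {τ : ℝ | 0 < τ ∧ ∃ ε : ℕ → ℝ, Tendsto ε atTop (nhds 0) ∧
        ∀ᶠ Q : ℕ in atTop, ∃ q : Fin (n+1) → ℤ, q ≠ 0 ∧ supZ q ≤ Q ∧
          (Q : ℝ) ^ (-τ - ε Q) ≤ |∑ i, (q i : ℝ) * ξ i| ∧
          |∑ i, (q i : ℝ) * ξ i| ≤ (Q : ℝ) ^ (-τ + ε Q)} :=
      ⟨hnR, εs, hεtend, hεev⟩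
    have hub : ∀ τ ∈ {τ : ℝ | 0 < τ ∧ ∃ ε : ℕ → ℝ, Tendsto ε atTop (nhds 0) ∧
        ∀ᶠ Q : ℕ in atTop, ∃ q : Fin (n+1) → ℤ, q ≠ 0 ∧ supZ q ≤ Q ∧
          (Q : ℝ) ^ (-τ - ε Q) ≤ |∑ i, (q i : ℝ) * ξ i| ∧
          |∑ i, (q i : ℝ) * ξ i| ≤ (Q : ℝ) ^ (-τ + ε Q)}, τ ≤ (n:ℝ) := by
      rintro τ ⟨hτ0, ε', htend', hev'⟩
      by_contra hτn
      push_neg at hτn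
      set d : ℝ := (τ - n)/2 with hd
      have hd0 : 0 < d := by rw [hd]; linarith
      obtain ⟨k, hk⟩ := exists_nat_one_div_lt hd0
      have hεd : ∀ᶠ Q : ℕ in atTop, ε' Q < d := htend'.eventually_lt_const hd0
      obtain ⟨Q, hQ⟩ := (((hev'.and (H2 k)).and hεd).and (eventually_ge_atTop 2)).exists
      obtain ⟨⟨⟨⟨q, hqne, hqsup, hlow, hup⟩, h2⟩, hεQ⟩, hQ2⟩ := hQ
      have hQR : (1:ℝ) < Q := by
        have h3 : (2:ℝ) ≤ Q := by exact_mod_cast hQ2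
        linarith
      have hchain : (Q:ℝ)^(-(n:ℝ) - 1/((k:ℝ)+1)) ≤ (Q:ℝ)^(-τ + ε' Q) :=
        le_trans (h2 q hqne hqsup) hup
      rw [Real.rpow_le_rpow_left_iff hQR] at hchain
      linarith [hk, hεQ]
    exact le_antisymm (csSup_le ⟨(n:ℝ), hmem⟩ hub) (le_csSup ⟨(n:ℝ), hub⟩ hmem)
end

section
/- Let m > n > 0, e₁,…,e_n ∈ ℝ^m, and τ₁,…,τ_n > 0. The following two assertions are equivalent: (a) there exist functions ε_i : ℕ → ℝ with ε_i(Q) → 0 such that for every sufficiently large integer Q there exists q ∈ ℤ^m with ‖q‖ ≤ Q and Q^{−τ_i − ε_i(Q)} ≤ |q·e_i| ≤ Q^{−τ_i + ε_i(Q)} for all i; (b) there exist an increasing sequence (Q_k)_{k≥1} of positive integers with log Q_{k+1} / log Q_k → 1 as k → ∞, a sequence (q_k)_{k≥1} in ℤ^m, and functions δ_i : ℕ → ℝ with δ_i(k) → 0, such that for all k: ‖q_k‖ ≤ Q_k and Q_k^{−τ_i − δ_i(k)} ≤ |q_k·e_i| ≤ Q_k^{−τ_i + δ_i(k)} for all i.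 -/
open Filter

theorem ratio_log_succ (c : ℕ) (hc : 2 ≤ c) :
    Tendsto (fun k : ℕ => Real.log ((c + (k+1) : ℕ)) / Real.log ((c + k : ℕ))) atTop (nhds 1) := by
  have hlogpos : ∀ k : ℕ, 0 < Real.log ((c + k : ℕ)) := by
    intro k
    apply Real.log_pos
    have : (2:ℕ) ≤ c + k := le_trans hc (Nat.le_add_right _ _)
    exact_mod_cast Nat.lt_of_lt_of_le one_lt_two this
  have heq : ∀ k : ℕ, Real.log ((c + (k+1) : ℕ)) / Real.log ((c + k : ℕ))
      = (Real.log ((c + (k+1) : ℕ)) - Real.log ((c + k : ℕ))) / Real.log ((c + k : ℕ)) + 1 := by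
    intro k
    rw [sub_div, div_self (hlogpos k).ne']
    ring
  rw [show (1:ℝ) = 0 + 1 by ring]
  refine Tendsto.congr (fun k => (heq k).symm) (Tendsto.add_const 1 ?_)
  have htop : Tendsto (fun k : ℕ => (c + k : ℕ)) atTop atTop :=
    tendsto_atTop_mono (fun k => Nat.le_add_left k c) tendsto_id
  apply Tendsto.div_atTop (a := (0:ℝ))
  · have h1 : ∀ k : ℕ, Real.log ((c + (k+1) : ℕ)) - Real.log ((c + k : ℕ))
        = Real.log (((c + (k+1) : ℕ) : ℝ) / ((c + k : ℕ) : ℝ)) := by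
      intro k
      rw [Real.log_div]
      · positivity
      · positivity
    refine Tendsto.congr (fun k => (h1 k).symm) ?_
    have h2 : Tendsto (fun k : ℕ => ((c + (k+1) : ℕ) : ℝ) / ((c + k : ℕ) : ℝ)) atTop (nhds 1) := by
      have h3 : ∀ k : ℕ, ((c + (k+1) : ℕ) : ℝ) / ((c + k : ℕ) : ℝ) = 1 + 1 / ((c + k : ℕ) : ℝ) := by
        intro k
        have : ((c + k : ℕ) : ℝ) ≠ 0 := by positivity
        field_simp
        push_cast
        ring
      rw [show (1:ℝ) = 1 + 0 by ring]
      refine Tendsto.congr (fun k => (h3 k).symm) (Tendsto.const_add 1 ?_)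
      exact tendsto_one_div_atTop_nhds_zero_nat.comp htop
    simpa [Function.comp_def] using (Real.continuousAt_log one_ne_zero).tendsto.comp h2
  · exact Real.tendsto_log_atTop.comp (tendsto_natCast_atTop_atTop.comp htop)

theorem stmt18 (m n : ℕ) (hn : 0 < n) (hmn : n < m)
    (e : Fin n → Fin m → ℝ) (τ : Fin n → ℝ) (hτ : ∀ i, 0 < τ i) :
    (∃ ε : Fin n → ℕ → ℝ, (∀ i, Tendsto (ε i) atTop (nhds 0)) ∧
      ∀ᶠ Q : ℕ in atTop, ∃ q : Fin m → ℤ, supZ q ≤ Q ∧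
        ∀ i, (Q : ℝ) ^ (-(τ i) - ε i Q) ≤ |∑ k, (q k : ℝ) * e i k| ∧
          |∑ k, (q k : ℝ) * e i k| ≤ (Q : ℝ) ^ (-(τ i) + ε i Q))
    ↔
    (∃ Qs : ℕ → ℕ, StrictMono Qs ∧ (∀ k, 0 < Qs k) ∧
      Tendsto (fun k => Real.log (Qs (k + 1)) / Real.log (Qs k)) atTop (nhds 1) ∧
      ∃ qs : ℕ → Fin m → ℤ, ∃ δ : Fin n → ℕ → ℝ,
        (∀ i, Tendsto (δ i) atTop (nhds 0)) ∧
        ∀ k, supZ (qs k) ≤ Qs k ∧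
          ∀ i, (Qs k : ℝ) ^ (-(τ i) - δ i k) ≤ |∑ l, (qs k l : ℝ) * e i l| ∧
            |∑ l, (qs k l : ℝ) * e i l| ≤ (Qs k : ℝ) ^ (-(τ i) + δ i k)) := by
  constructor
  · intro h
    obtain ⟨ε, hε, hev⟩ := h
    obtain ⟨N, hN⟩ := eventually_atTop.mp hev
    set N' := max N 2 with hN'
    have hN'2 : 2 ≤ N' := le_max_right _ _
    have hNN' : N ≤ N' := le_max_left _ _
    have hex : ∀ k : ℕ, ∃ q : Fin m → ℤ, supZ q ≤ (N' + k : ℕ) ∧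
        ∀ i, ((N' + k : ℕ) : ℝ) ^ (-(τ i) - ε i (N' + k)) ≤ |∑ l, (q l : ℝ) * e i l| ∧
          |∑ l, (q l : ℝ) * e i l| ≤ ((N' + k : ℕ) : ℝ) ^ (-(τ i) + ε i (N' + k)) :=
      fun k => hN (N' + k) (le_trans hNN' (Nat.le_add_right _ _))
    choose qs hqs1 hqs2 using hex
    have htop : Tendsto (fun k : ℕ => N' + k) atTop atTop :=
      tendsto_atTop_mono (fun k => Nat.le_add_left k N') tendsto_id
    refine ⟨fun k => N' + k, fun a b hab => Nat.add_lt_add_left hab N',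
      ?_, ratio_log_succ N' hN'2, qs, fun i k => ε i (N' + k),
      fun i => (hε i).comp htop, fun k => ⟨hqs1 k, hqs2 k⟩⟩
    intro k
    exact Nat.add_pos_left (lt_of_lt_of_le two_pos hN'2) k
  · intro h
    obtain ⟨Qs, hmono, hpos, hratio, qs, δ, hδ, hkey⟩ := h
    classical
    -- index of the largest Qs k ≤ Q
    set K : ℕ → ℕ := fun Q => Nat.findGreatest (fun k => Qs k ≤ Q) Q with hK
    have hle : ∀ k, k ≤ Qs k := fun k => hmono.le_apply
    have hK1 : ∀ Q, Qs 0 ≤ Q → Qs (K Q) ≤ Q := by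
      intro Q h0
      exact Nat.findGreatest_spec (P := fun k => Qs k ≤ Q) (Nat.zero_le Q) h0
    have hK2 : ∀ Q, Q < Qs (K Q + 1) := by
      intro Q
      by_cases h : K Q + 1 ≤ Q
      · by_contra hcon
        exact Nat.findGreatest_is_greatest (P := fun k => Qs k ≤ Q)
          (Nat.lt_succ_self _) h (Nat.not_lt.mp hcon)
      · calc Q < K Q + 1 := Nat.lt_of_not_le h
          _ ≤ Qs (K Q + 1) := hle _
    have hKtop : Tendsto K atTop atTop := by
      apply tendsto_atTop_atTop.mpr
      intro b
      refine ⟨Qs b, fun Q hQ => ?_⟩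
      exact Nat.le_findGreatest (le_trans (hle b) hQ) hQ
    -- θ Q = log Qs(K Q) / log Q
    set θ : ℕ → ℝ := fun Q => Real.log (Qs (K Q)) / Real.log Q with hθdef
    have hev2 : ∀ᶠ Q : ℕ in atTop, 2 ≤ K Q := hKtop.eventually_ge_atTop 2
    have hevQ : ∀ᶠ Q : ℕ in atTop, max (Qs 0) 2 ≤ Q := eventually_ge_atTop _
    -- basic eventual facts
    have hbasic : ∀ᶠ Q : ℕ in atTop, Qs (K Q) ≤ Q ∧ Q < Qs (K Q + 1) ∧ 2 ≤ Q ∧ 2 ≤ Qs (K Q) := by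
      filter_upwards [hev2, hevQ] with Q h2 hQ
      have hQ2 : 2 ≤ Q := le_trans (le_max_right _ _) hQ
      exact ⟨hK1 Q (le_trans (le_max_left _ _) hQ), hK2 Q, hQ2, le_trans h2 (hle _)⟩
    have hθ01 : ∀ᶠ Q : ℕ in atTop, 0 ≤ θ Q ∧ θ Q ≤ 1 := by
      filter_upwards [hbasic] with Q ⟨h1, h2, h3, h4⟩
      have hlogQ : 0 < Real.log Q := Real.log_pos (by exact_mod_cast h3)
      have hlogP : 0 ≤ Real.log (Qs (K Q)) := Real.log_nonneg (by exact_mod_cast le_trans one_le_two h4)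
      constructor
      · positivity
      · rw [div_le_one hlogQ]
        exact Real.log_le_log (by positivity) (by exact_mod_cast h1)
    have hθ1 : Tendsto θ atTop (nhds 1) := by
      -- squeeze between log Qs k / log Qs (k+1) ∘ K and 1
      have hg : Tendsto (fun k => Real.log (Qs k) / Real.log (Qs (k + 1))) atTop (nhds 1) := by
        have := (hratio.inv₀ one_ne_zero)
        simpa [inv_div] using this
      refine tendsto_of_tendsto_of_tendsto_of_le_of_le' (hg.comp hKtop) tendsto_const_nhds ?_ ?_
      · filter_upwards [hbasic] with Q ⟨h1, h2, h3, h4⟩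
        have hlogQ : 0 < Real.log Q := Real.log_pos (by exact_mod_cast h3)
        have hlogP : 0 ≤ Real.log (Qs (K Q)) := Real.log_nonneg (by exact_mod_cast le_trans one_le_two h4)
        have hlogle : Real.log Q ≤ Real.log (Qs (K Q + 1)) :=
          Real.log_le_log (by positivity) (by exact_mod_cast h2.le)
        exact div_le_div_of_nonneg_left hlogP hlogQ hlogle
      · filter_upwards [hθ01] with Q hQ using hQ.2
    -- define ε
    refine ⟨fun i Q => τ i * (1 - θ Q) + |δ i (K Q)|, ?_, ?_⟩
    · intro i
      have h1 : Tendsto (fun Q => τ i * (1 - θ Q)) atTop (nhds 0) := by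
        have := ((tendsto_const_nhds (x := (1:ℝ))).sub hθ1).const_mul (τ i)
        simpa using this
      have h2 : Tendsto (fun Q => |δ i (K Q)|) atTop (nhds 0) := by
        have := ((hδ i).comp hKtop).abs
        simpa using this
      simpa using h1.add h2
    · have hsgn : ∀ᶠ Q : ℕ in atTop, ∀ i, -τ i ≤ δ i (K Q) := by
        have : ∀ᶠ k : ℕ in atTop, ∀ i, -τ i ≤ δ i k := by
          rw [eventually_all]
          intro i
          have := (hδ i).eventually (eventually_ge_nhds (show -τ i < 0 by linarith [hτ i]))
          filter_upwards [this] with k hk using hk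
        exact hKtop.eventually this
      filter_upwards [hbasic, hθ01, hsgn] with Q ⟨h1, h2, h3, h4⟩ hθb hsg
      refine ⟨qs (K Q), ?_, ?_⟩
      · exact le_trans (hkey (K Q)).1 (by exact_mod_cast h1)
      · intro i
        obtain ⟨hlow, hhigh⟩ := (hkey (K Q)).2 i
        have hQ1 : (1:ℝ) < (Q:ℝ) := by exact_mod_cast h3
        have hQ0 : (0:ℝ) < (Q:ℝ) := by positivity
        have hP0 : (0:ℝ) < (Qs (K Q) : ℝ) := by exact_mod_cast lt_of_lt_of_le two_pos h4
        have hPQ : ((Qs (K Q) : ℝ)) = (Q:ℝ) ^ θ Q := by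
          rw [hθdef]
          exact (Real.rpow_logb hQ0 (ne_of_gt hQ1) hP0).symm
        have hpow : ∀ x : ℝ, ((Qs (K Q) : ℝ)) ^ x = (Q:ℝ) ^ (θ Q * x) := by
          intro x
          rw [hPQ, ← Real.rpow_mul hQ0.le]
        obtain ⟨hθ0, hθle⟩ := hθb
        have habs : δ i (K Q) ≤ |δ i (K Q)| := le_abs_self _
        have habs' : -|δ i (K Q)| ≤ δ i (K Q) := neg_abs_le _
        have habs0 : (0:ℝ) ≤ |δ i (K Q)| := abs_nonneg _
        have hτi := hτ i
        have hsgi := hsg i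
        constructor
        · refine le_trans ?_ hlow
          rw [hpow]
          apply Real.rpow_le_rpow_of_exponent_le hQ1.le
          nlinarith [mul_nonneg (sub_nonneg.2 hθle) (show 0 ≤ 2 * τ i + δ i (K Q) by linarith)]
        · refine le_trans hhigh ?_
          rw [hpow]
          apply Real.rpow_le_rpow_of_exponent_le hQ1.le
          nlinarith [mul_nonneg hθ0 (sub_nonneg.2 habs), mul_nonneg (sub_nonneg.2 hθle) habs0]
end

section
/- For almost every real number ξ (with respect to Lebesgue measure) and every constant c > 0, there exist infinitely many integers Q such that any two nonzero vectors q = (q₁,q₂) and q' = (q'₁,q'₂) in ℤ² satisfying max(|q₁|,|q₂|) ≤ c·Q, max(|q'₁|,|q'₂|) ≤ c·Q, |q₁ξ − q₂| ≤ c·Q^{−1} and |q'₁ξ − q'₂| ≤ c·Q^{−1} are linearly dependent over ℝ. -/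
open MeasureTheory Filter Metric

/-- The set of `1/(n+1)`-badly-approximable numbers at scales `≥ N`. -/
def dioBad (n N : ℕ) : Set ℝ :=
  ⋂ (q : ℕ) (p : ℤ), {ξ : ℝ | N ≤ q → (1 : ℝ) / (n + 1) / q ≤ |(q : ℝ) * ξ - p|}

lemma dioBad_isClosed (n N : ℕ) : IsClosed (dioBad n N) := by
  refine isClosed_iInter fun q => isClosed_iInter fun p => ?_
  by_cases h : N ≤ q
  · have he : {ξ : ℝ | N ≤ q → (1 : ℝ) / (n + 1) / q ≤ |(q : ℝ) * ξ - p|}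
        = {ξ : ℝ | (1 : ℝ) / (n + 1) / q ≤ |(q : ℝ) * ξ - p|} := by
      ext ξ; simp [h]
    rw [he]
    exact isClosed_le continuous_const
      (((continuous_const.mul continuous_id).sub continuous_const).abs)
  · have he : {ξ : ℝ | N ≤ q → (1 : ℝ) / (n + 1) / q ≤ |(q : ℝ) * ξ - p|} = Set.univ := by
      ext ξ; simp [h]
    rw [he]; exact isClosed_univ

lemma dioBad_irrational {n N : ℕ} {ξ : ℝ} (hξ : ξ ∈ dioBad n N) : Irrational ξ := by
  rw [Irrational]
  rintro ⟨r, hr⟩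
  have h := Set.mem_iInter.1 (Set.mem_iInter.1 hξ (r.den * (N + 1))) (r.num * (N + 1))
  have hq : N ≤ r.den * (N + 1) :=
    calc N ≤ 1 * (N + 1) := by omega
    _ ≤ r.den * (N + 1) := Nat.mul_le_mul_right _ r.pos
  have h2 := h hq
  have hd : (r.den : ℝ) ≠ 0 := Nat.cast_ne_zero.2 r.den_nz
  have hzero : ((r.den * (N + 1) : ℕ) : ℝ) * ξ - ((r.num * (N + 1) : ℤ) : ℝ) = 0 := by
    rw [← hr, Rat.cast_def]
    push_cast
    field_simp
    ring
  rw [hzero, abs_zero] at h2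
  have hpos : (0 : ℝ) < (1 : ℝ) / (n + 1) / ((r.den * (N + 1) : ℕ) : ℝ) := by
    apply div_pos (by positivity)
    have : 0 < r.den * (N + 1) := Nat.mul_pos r.pos (Nat.succ_pos _)
    exact_mod_cast this
  linarith

lemma dioFinite (ξ : ℝ) (M : ℕ) :
    {r : ℚ | |ξ - r| < 1 / (r.den : ℝ) ^ 2 ∧ r.den ≤ M}.Finite := by
  set K : ℤ := ⌈|ξ| + 1⌉ with hKdef
  have hKR : |ξ| + 1 ≤ (K : ℝ) := Int.le_ceil _
  have hK0 : (0 : ℝ) ≤ (K : ℝ) := le_trans (by positivity) hKR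
  have hfin : ((Set.Icc (-(K * M)) (K * M)) ×ˢ (Set.Icc 0 M)).Finite :=
    (Set.finite_Icc _ _).prod (Set.finite_Icc _ _)
  refine (hfin.preimage (Set.injOn_of_injective (f := fun r : ℚ => (r.num, r.den))
    (fun a b hab => ?_))).subset ?_
  · have h1 : a.num = b.num := congrArg Prod.fst hab
    have h2 : a.den = b.den := congrArg Prod.snd hab
    exact Rat.ext h1 h2
  · rintro r ⟨h1, h2⟩
    have hden1 : (1 : ℝ) ≤ (r.den : ℝ) := by exact_mod_cast r.pos
    have hMR : (r.den : ℝ) ≤ M := by exact_mod_cast h2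
    have h1' : |ξ - r| < 1 := lt_of_lt_of_le h1 (by
      rw [div_le_one (by positivity)]
      nlinarith)
    have hrabs : |(r : ℝ)| ≤ |ξ| + 1 := by
      have := abs_sub_abs_le_abs_sub (r : ℝ) ξ
      rw [abs_sub_comm] at this
      linarith
    have hnumeq : |(r.num : ℝ)| = |(r : ℝ)| * r.den := by
      rw [Rat.cast_def, abs_div, abs_of_nonneg (by positivity : (0:ℝ) ≤ (r.den : ℝ)),
        div_mul_cancel₀]
      linarith
    have hnum : |(r.num : ℝ)| ≤ (K : ℝ) * M := by
      rw [hnumeq]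
      have h0 : (0:ℝ) ≤ (r.den : ℝ) := by linarith
      nlinarith [abs_nonneg (r : ℝ)]
    have hnumZ : |r.num| ≤ K * M := by exact_mod_cast hnum
    constructor
    · exact abs_le.1 hnumZ
    · exact ⟨Nat.zero_le _, h2⟩

lemma dioDenUnbounded {ξ : ℝ} (hξ : Irrational ξ) (M : ℕ) :
    ∃ r : ℚ, |ξ - r| < 1 / (r.den : ℝ) ^ 2 ∧ M < r.den := by
  by_contra h
  push_neg at h
  apply Real.infinite_rat_abs_sub_lt_one_div_den_sq_of_irrational hξ
  exact (dioFinite ξ M).subset (fun r hr => ⟨hr, h r hr⟩)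


lemma dioBad_null (n N : ℕ) : volume (dioBad n N) = 0 := by
  by_contra h
  set B := dioBad n N with hB
  have hm : MeasurableSet B := (dioBad_isClosed n N).measurableSet
  have hres : volume.restrict B ≠ 0 := by
    rw [Ne, Measure.restrict_eq_zero]; exact h
  have : (ae (volume.restrict B)).NeBot := ae_neBot.2 hres
  obtain ⟨ξ₀, hmem, hdens⟩ :=
    ((ae_restrict_mem hm).and (Besicovitch.ae_tendsto_measure_inter_div volume B)).exists
  set ε : ℝ := 1 / (n + 1) with hεdef
  have hε : 0 < ε := by positivity
  have hε1 : ε ≤ 1 := by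
    rw [hεdef, div_le_one (by positivity)]
    have := Nat.cast_nonneg (α := ℝ) n
    linarith
  have hIrr : Irrational ξ₀ := dioBad_irrational hmem
  have ha : ENNReal.ofReal (1 - ε / 2) < 1 := by
    rw [ENNReal.ofReal_lt_one]; linarith
  have hev := hdens.eventually_const_lt ha
  obtain ⟨r₀, hr₀pos, hsubs⟩ := mem_nhdsGT_iff_exists_Ioo_subset.1 hev
  have hr₀ : (0:ℝ) < r₀ := hr₀pos
  set M : ℕ := max N ⌈Real.sqrt (2 / r₀)⌉₊ with hM
  obtain ⟨r, hr1, hr2⟩ := dioDenUnbounded hIrr M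
  set q : ℕ := r.den with hqdef
  set p : ℤ := r.num with hpdef
  have hq1 : 1 ≤ q := r.pos
  have hqN : N ≤ q := lt_of_le_of_lt (le_max_left _ _) hr2 |>.le
  have hqR : (1:ℝ) ≤ (q:ℝ) := by exact_mod_cast hq1
  have hqR0 : (0:ℝ) < (q:ℝ) := by linarith
  -- q is large: 2/q² < r₀
  have hqbig : Real.sqrt (2 / r₀) < (q : ℝ) := by
    have h1 : (⌈Real.sqrt (2 / r₀)⌉₊ : ℝ) < (q:ℝ) := by
      exact_mod_cast lt_of_le_of_lt (le_max_right N _) hr2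
    exact lt_of_le_of_lt (Nat.le_ceil _) h1
  have hsq : 2 / r₀ < (q:ℝ)^2 := by
    have h0 : (0:ℝ) ≤ 2 / r₀ := by positivity
    calc 2 / r₀ = Real.sqrt (2/r₀) ^ 2 := (Real.sq_sqrt h0).symm
    _ < (q:ℝ)^2 := by
        apply sq_lt_sq' _ hqbig
        have := Real.sqrt_nonneg (2/r₀); linarith
  set rr : ℝ := 2 / (q:ℝ)^2 with hrrdef
  have hrrpos : 0 < rr := by positivity
  have hrr : rr < r₀ := by
    rw [hrrdef, div_lt_iff₀ (by positivity)]
    rw [div_lt_iff₀ hr₀] at hsq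
    linarith
  -- the rational point
  have hrcast : (r : ℝ) = (p:ℝ)/(q:ℝ) := by rw [Rat.cast_def]
  have hrclose : |ξ₀ - (r:ℝ)| < 1 / (q:ℝ)^2 := hr1
  -- exclusion
  have hdisj : Disjoint B (ball (r:ℝ) (ε / (q:ℝ)^2)) := by
    rw [Set.disjoint_left]
    intro ξ hξB hξball
    have hball : |ξ - (r:ℝ)| < ε / (q:ℝ)^2 := by
      rw [mem_ball, Real.dist_eq] at hξball; exact hξball
    have hbad := Set.mem_iInter.1 (Set.mem_iInter.1 hξB q) p hqN
    have heq0 : (q:ℝ) * ξ - (p:ℝ) = (q:ℝ) * (ξ - (r:ℝ)) := by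
      rw [hrcast]; field_simp
    have heq : |(q:ℝ) * ξ - (p:ℝ)| = (q:ℝ) * |ξ - (r:ℝ)| := by
      rw [heq0, abs_mul, abs_of_pos hqR0]
    rw [heq] at hbad
    have : ε / (q:ℝ) ≤ (q:ℝ) * |ξ - (r:ℝ)| := hbad
    have h2 : (q:ℝ) * |ξ - (r:ℝ)| < (q:ℝ) * (ε / (q:ℝ)^2) := by
      exact mul_lt_mul_of_pos_left hball hqR0
    have h3 : (q:ℝ) * (ε / (q:ℝ)^2) = ε / (q:ℝ) := by field_simp
    rw [h3] at h2
    linarith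
  -- inclusion
  have hincl : ball (r:ℝ) (ε / (q:ℝ)^2) ⊆ closedBall ξ₀ rr := by
    intro x hx
    rw [mem_ball, Real.dist_eq] at hx
    rw [mem_closedBall, Real.dist_eq]
    have : |(r:ℝ) - ξ₀| < 1/(q:ℝ)^2 := by rw [abs_sub_comm]; exact hrclose
    calc |x - ξ₀| ≤ |x - (r:ℝ)| + |(r:ℝ) - ξ₀| := abs_sub_le _ _ _
    _ ≤ ε/(q:ℝ)^2 + 1/(q:ℝ)^2 := by linarith
    _ ≤ rr := by
        have h12 : ε/(q:ℝ)^2 ≤ 1/(q:ℝ)^2 := by gcongr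
        have h22 : 1/(q:ℝ)^2 + 1/(q:ℝ)^2 = rr := by rw [hrrdef]; ring
        linarith
  -- measure estimate
  have hI : volume (closedBall ξ₀ rr) = ENNReal.ofReal (2 * rr) := Real.volume_closedBall _ _
  have hb : volume (ball (r:ℝ) (ε/(q:ℝ)^2)) = ENNReal.ofReal (2 * (ε/(q:ℝ)^2)) :=
    Real.volume_ball _ _
  have hdisj2 : Disjoint (B ∩ closedBall ξ₀ rr) (ball (r:ℝ) (ε/(q:ℝ)^2)) :=
    hdisj.mono_left Set.inter_subset_left
  have hun : volume (B ∩ closedBall ξ₀ rr) + ENNReal.ofReal (2 * (ε/(q:ℝ)^2))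
      ≤ ENNReal.ofReal (2*rr) := by
    rw [← hb, ← hI, ← measure_union hdisj2 measurableSet_ball]
    exact measure_mono (Set.union_subset Set.inter_subset_right hincl)
  have hkey : volume (B ∩ closedBall ξ₀ rr)
      ≤ ENNReal.ofReal (1 - ε/2) * volume (closedBall ξ₀ rr) := by
    rw [hI, ← ENNReal.ofReal_mul (by linarith : (0:ℝ) ≤ 1 - ε/2)]
    have h1 : volume (B ∩ closedBall ξ₀ rr)
        ≤ ENNReal.ofReal (2*rr) - ENNReal.ofReal (2*(ε/(q:ℝ)^2)) :=
      ENNReal.le_sub_of_add_le_right ENNReal.ofReal_ne_top hun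
    have h2 : ENNReal.ofReal (2*rr) - ENNReal.ofReal (2*(ε/(q:ℝ)^2))
        = ENNReal.ofReal (2*rr - 2*(ε/(q:ℝ)^2)) := (ENNReal.ofReal_sub _ (by positivity)).symm
    have h3 : 2*rr - 2*(ε/(q:ℝ)^2) = (1 - ε/2) * (2*rr) := by rw [hrrdef]; field_simp
    rw [h2, h3] at h1; exact h1
  have hratio : volume (B ∩ closedBall ξ₀ rr) / volume (closedBall ξ₀ rr)
      ≤ ENNReal.ofReal (1 - ε/2) := ENNReal.div_le_of_le_mul hkey
  have hgt := hsubs ⟨hrrpos, hrr⟩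
  exact absurd hratio (not_le.2 hgt)


set_option maxHeartbeats 1000000 in
theorem stmt19 :
    ∀ᵐ ξ ∂(volume : Measure ℝ), ∀ c : ℝ, 0 < c →
      {Q : ℕ | 0 < Q ∧ ∀ q q' : ℤ × ℤ, q ≠ 0 → q' ≠ 0 →
        max |(q.1 : ℝ)| |(q.2 : ℝ)| ≤ c * Q →
        max |(q'.1 : ℝ)| |(q'.2 : ℝ)| ≤ c * Q →
        |(q.1 : ℝ) * ξ - (q.2 : ℝ)| ≤ c / Q →
        |(q'.1 : ℝ) * ξ - (q'.2 : ℝ)| ≤ c / Q →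
        q.1 * q'.2 - q.2 * q'.1 = 0}.Infinite := by
  have hnull : volume (⋃ (n : ℕ) (N : ℕ), dioBad n N) = 0 :=
    measure_iUnion_null fun n => measure_iUnion_null fun N => dioBad_null n N
  filter_upwards [measure_eq_zero_iff_ae_notMem.1 hnull] with ξ hξ c hc
  have hP : ∀ n N : ℕ, ∃ q : ℕ, N ≤ q ∧ ∃ p : ℤ,
      |(q:ℝ) * ξ - p| < (1:ℝ) / (n + 1) / q := by
    intro n N
    have hnm : ξ ∉ dioBad n N := fun h =>
      hξ (Set.mem_iUnion.2 ⟨n, Set.mem_iUnion.2 ⟨N, h⟩⟩)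
    simp only [dioBad, Set.mem_iInter, Set.mem_setOf_eq] at hnm
    push_neg at hnm
    obtain ⟨q, p, hNq, hlt⟩ := hnm
    exact ⟨q, hNq, p, hlt⟩
  -- key: for every N₀ there is a larger Q in the set
  have hkey : ∀ N₀ : ℕ, ∃ Q, N₀ < Q ∧ 0 < Q ∧ ∀ q q' : ℤ × ℤ, q ≠ 0 → q' ≠ 0 →
      max |(q.1 : ℝ)| |(q.2 : ℝ)| ≤ c * Q →
      max |(q'.1 : ℝ)| |(q'.2 : ℝ)| ≤ c * Q →
      |(q.1 : ℝ) * ξ - (q.2 : ℝ)| ≤ c / Q →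
      |(q'.1 : ℝ) * ξ - (q'.2 : ℝ)| ≤ c / Q →
      q.1 * q'.2 - q.2 * q'.1 = 0 := by
    intro N₀
    obtain ⟨n, hn⟩ := exists_nat_one_div_lt
      (show (0:ℝ) < min (1/(16*c^2)) (min (1/(4*c)) 1) by positivity)
    set δ : ℝ := 1 / ((n:ℝ) + 1) with hδdef
    have hδpos : 0 < δ := by positivity
    have hδ1 : δ ≤ 1 := le_of_lt (lt_of_lt_of_le hn
      ((min_le_right _ _).trans (min_le_right _ _)))
    have hδa : δ ≤ 1/(16*c^2) := le_of_lt (lt_of_lt_of_le hn (min_le_left _ _))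
    have hδb : δ ≤ 1/(4*c) := le_of_lt (lt_of_lt_of_le hn
      ((min_le_right _ _).trans (min_le_left _ _)))
    have hsδpos : 0 < Real.sqrt δ := Real.sqrt_pos.2 hδpos
    have hsδ1 : Real.sqrt δ ≤ 1 := by
      rw [show (1:ℝ) = Real.sqrt 1 from Real.sqrt_one.symm]
      exact Real.sqrt_le_sqrt hδ1
    have hcs : c * Real.sqrt δ ≤ 1/4 := by
      have h1 : Real.sqrt δ ≤ 1/(4*c) := by
        rw [show (1/(4*c) : ℝ) = Real.sqrt ((1/(4*c))^2) from
          (Real.sqrt_sq (by positivity)).symm]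
        apply Real.sqrt_le_sqrt
        calc δ ≤ 1/(16*c^2) := hδa
        _ = (1/(4*c))^2 := by field_simp; ring
      calc c * Real.sqrt δ ≤ c * (1/(4*c)) := by
            exact mul_le_mul_of_nonneg_left h1 hc.le
      _ = 1/4 := by field_simp
    have hcd : c * δ ≤ 1/4 := by
      calc c * δ ≤ c * (1/(4*c)) := mul_le_mul_of_nonneg_left hδb hc.le
      _ = 1/4 := by field_simp
    obtain ⟨q, hNq, p, hqp⟩ := hP n (N₀ + 1)
    rw [← hδdef] at hqp
    clear hn hδdef
    clear_value δ
    have hq1 : 1 ≤ q := le_trans (Nat.le_add_left 1 N₀) hNq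
    have hqR : (1:ℝ) ≤ (q:ℝ) := by exact_mod_cast hq1
    have hqR0 : (0:ℝ) < (q:ℝ) := by linarith
    set Q : ℕ := ⌈(q:ℝ) / Real.sqrt δ⌉₊ with hQdef
    have hQlow : (q:ℝ) / Real.sqrt δ ≤ (Q:ℝ) := Nat.le_ceil _
    have hQhigh : (Q:ℝ) < (q:ℝ) / Real.sqrt δ + 1 := Nat.ceil_lt_add_one (by positivity)
    have hqQ : q ≤ Q := by
      have h1 : (q:ℝ) ≤ (q:ℝ) / Real.sqrt δ := by
        rw [le_div_iff₀ hsδpos]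
        nlinarith
      exact_mod_cast h1.trans hQlow
    have hQpos : 0 < Q := lt_of_lt_of_le hq1 hqQ
    clear hQdef
    clear_value Q
    have hQR0 : (0:ℝ) < (Q:ℝ) := by exact_mod_cast hQpos
    refine ⟨Q, lt_of_lt_of_le (Nat.lt_succ_self N₀) (hNq.trans hqQ), hQpos, ?_⟩
    -- every admissible vector is parallel to (q, p)
    have hdet : ∀ a b : ℤ, max |(a:ℝ)| |(b:ℝ)| ≤ c * Q → |(a:ℝ) * ξ - b| ≤ c / Q →
        a * p - b * (q:ℤ) = 0 := by
      intro a b hm happ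
      have haR : |(a:ℝ)| ≤ c * Q := le_trans (le_max_left _ _) hm
      have hDr : ((a * p - b * (q:ℤ) : ℤ) : ℝ)
          = (a:ℝ) * ((p:ℝ) - (q:ℝ) * ξ) + (q:ℝ) * ((a:ℝ) * ξ - (b:ℝ)) := by
        push_cast; ring
      have habs : |((a * p - b * (q:ℤ) : ℤ) : ℝ)|
          ≤ |(a:ℝ)| * |(q:ℝ) * ξ - (p:ℝ)| + (q:ℝ) * |(a:ℝ) * ξ - (b:ℝ)| := by
        rw [hDr]
        calc |(a:ℝ) * ((p:ℝ) - (q:ℝ) * ξ) + (q:ℝ) * ((a:ℝ) * ξ - (b:ℝ))|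
            ≤ |(a:ℝ) * ((p:ℝ) - (q:ℝ) * ξ)| + |(q:ℝ) * ((a:ℝ) * ξ - (b:ℝ))| :=
              abs_add_le _ _
        _ = |(a:ℝ)| * |(q:ℝ) * ξ - (p:ℝ)| + (q:ℝ) * |(a:ℝ) * ξ - (b:ℝ)| := by
              rw [abs_mul, abs_mul, abs_of_pos hqR0, abs_sub_comm]
      -- term 2 bound
      have ht2 : (q:ℝ) * |(a:ℝ) * ξ - (b:ℝ)| ≤ c * Real.sqrt δ := by
        have h1 : (q:ℝ) * |(a:ℝ) * ξ - (b:ℝ)| ≤ (q:ℝ) * (c / Q) :=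
          mul_le_mul_of_nonneg_left happ (by linarith)
        have h2 : (q:ℝ) * (c / Q) ≤ c * Real.sqrt δ := by
          rw [mul_div_assoc'] at *
          rw [div_le_iff₀ hQR0]
          have : (q:ℝ) ≤ (Q:ℝ) * Real.sqrt δ := by
            rw [div_le_iff₀ hsδpos] at hQlow; linarith
          nlinarith
        linarith
      -- term 1 bound
      have ht1 : |(a:ℝ)| * |(q:ℝ) * ξ - (p:ℝ)| ≤ 1/2 := by
        have h1 : |(a:ℝ)| * |(q:ℝ) * ξ - (p:ℝ)| ≤ (c * Q) * (δ / q) :=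
          mul_le_mul haR hqp.le (abs_nonneg _) (by positivity)
        have h2 : (c * Q) * (δ / q) ≤ c * Real.sqrt δ + c * δ := by
          have hQq : (Q:ℝ) * (δ / q) ≤ Real.sqrt δ + δ / q := by
            have hd : 0 < δ / (q:ℝ) := by positivity
            have := mul_le_mul_of_nonneg_right hQhigh.le hd.le
            calc (Q:ℝ) * (δ/q) ≤ ((q:ℝ)/Real.sqrt δ + 1) * (δ/q) := this
            _ = δ / Real.sqrt δ + δ/q := by field_simp
            _ = Real.sqrt δ + δ/q := by rw [Real.div_sqrt]
          calc (c * Q) * (δ / q) = c * ((Q:ℝ) * (δ/q)) := by ring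
          _ ≤ c * (Real.sqrt δ + δ/q) := mul_le_mul_of_nonneg_left hQq hc.le
          _ = c * Real.sqrt δ + c * (δ/q) := by ring
          _ ≤ c * Real.sqrt δ + c * δ := by
              have : δ / (q:ℝ) ≤ δ := by
                rw [div_le_iff₀ hqR0]; nlinarith
              nlinarith
        linarith [hcs, hcd]
      have hlt : |((a * p - b * (q:ℤ) : ℤ) : ℝ)| < 1 := by
        have := ht2.trans hcs
        linarith
      have hltZ : |a * p - b * (q:ℤ)| < 1 := by exact_mod_cast hlt
      exact Int.abs_lt_one_iff.1 hltZ
    rintro ⟨a, b⟩ ⟨a', b'⟩ hv hv' hmax hmax' happ happ'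
    have h1 : a * p - b * (q:ℤ) = 0 := hdet a b hmax happ
    have h2 : a' * p - b' * (q:ℤ) = 0 := hdet a' b' hmax' happ'
    show a * b' - b * a' = 0
    have h3 : (a * b' - b * a') * (q:ℤ) = 0 := by linear_combination a' * h1 - a * h2
    have hq0 : (q:ℤ) ≠ 0 := Int.natCast_ne_zero.2 (by omega)
    exact (mul_eq_zero.1 h3).resolve_right hq0
  apply Set.infinite_of_not_bddAbove
  rintro ⟨bnd, hbnd⟩
  obtain ⟨Q, hQgt, hQmem⟩ := hkey bnd
  exact absurd (hbnd ⟨hQmem.1, hQmem.2⟩) (not_le.2 hQgt)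
end
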